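/- arXiv:0906.1125 — 8 statements merged into one kernel-verified Lean document; each statement's English description precedes it below -/
import Mathlib

section
/- Let R be a ring and suppose the category of left R-modules carries an additive closed symmetric monoidal structure ∧. Set Λ := R ∧ R, and endow Λ with two right R-module actions: x ⊙₁ r := (ρᵣ ∧ 𝟙_R)(x) and x ⊙₂ r := (𝟙_R ∧ ρᵣ)(x), where ρᵣ : R → R is the left R-module endomorphism t ↦ t·r. Then ⊙₁ and ⊙₂ are well-defined right R-module structures that commute with each other and with the left R-action on Λ, and there is an isomorphism of left R-modules ((Λ, using ⊙₁) ⊗[R] A, using the remaining action ⊙₂) ⊗[R] B ≅ A ∧ B, natural in both A and B. -/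
open CategoryTheory MonoidalCategory
open scoped TensorProduct

universe u

variable (R : Type u) [Ring R]
variable [MonoidalCategory (ModuleCat.{u} R)] [SymmetricCategory (ModuleCat.{u} R)]
variable [MonoidalClosed (ModuleCat.{u} R)] [MonoidalPreadditive (ModuleCat.{u} R)]

/-- Right multiplication by `r`, as an endomorphism of `R` in `ModuleCat R`. -/
def rho (r : R) : ModuleCat.of R R ⟶ ModuleCat.of R R :=
  ModuleCat.ofHom
    { toFun := fun t => t * r
      map_add' := fun a b => add_mul a b r
      map_smul' := fun c t => by simp [smul_eq_mul, mul_assoc] }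

/-- `Λ = R ∧ R`. -/
noncomputable abbrev Lambda : ModuleCat.{u} R := ModuleCat.of R R ⊗ ModuleCat.of R R

/-- The first right action `x ⊙₁ r = (ρ_r ∧ 𝟙)(x)` on `Λ = R ∧ R`. -/
noncomputable def odot1 (r : R) (x : ↥(Lambda R)) : ↥(Lambda R) :=
  (rho R r ▷ ModuleCat.of R R) x

/-- The second right action `x ⊙₂ r = (𝟙 ∧ ρ_r)(x)` on `Λ = R ∧ R`. -/
noncomputable def odot2 (r : R) (x : ↥(Lambda R)) : ↥(Lambda R) :=
  (ModuleCat.of R R ◁ rho R r) x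

/-- The submodule of `(Λ ⊗[ℤ] A) ⊗[ℤ] B` of relations defining the tensor product
`(Λ ⊗[R,⊙₁] A) ⊗[R,⊙₂] B` over the two right `R`-actions `⊙₁` and `⊙₂` on `Λ`. -/
noncomputable def rel (A B : ModuleCat.{u} R) :
    Submodule R ((↥(Lambda R) ⊗[ℤ] ↥A) ⊗[ℤ] ↥B) :=
  Submodule.span R
    ({ z | ∃ (r : R) (x : ↥(Lambda R)) (a : ↥A) (b : ↥B),
        z = (odot1 R r x ⊗ₜ[ℤ] a) ⊗ₜ[ℤ] b - (x ⊗ₜ[ℤ] (r • a)) ⊗ₜ[ℤ] b } ∪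
      { z | ∃ (r : R) (x : ↥(Lambda R)) (a : ↥A) (b : ↥B),
        z = (odot2 R r x ⊗ₜ[ℤ] a) ⊗ₜ[ℤ] b - (x ⊗ₜ[ℤ] a) ⊗ₜ[ℤ] (r • b) })

/-- The iterated tensor product `((Λ, ⊙₁) ⊗[R] A, ⊙₂) ⊗[R] B`, realized as the quotient of
`(Λ ⊗[ℤ] A) ⊗[ℤ] B` by the relations identifying the right actions `⊙₁`, `⊙₂` on `Λ` with the
left actions on `A` and `B` respectively; it is a left `R`-module via the left action on `Λ`. -/
noncomputable def TT (A B : ModuleCat.{u} R) : Type u :=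
  ((↥(Lambda R) ⊗[ℤ] ↥A) ⊗[ℤ] ↥B) ⧸ rel R A B

noncomputable instance (A B : ModuleCat.{u} R) : AddCommGroup (TT R A B) :=
  inferInstanceAs (AddCommGroup (((↥(Lambda R) ⊗[ℤ] ↥A) ⊗[ℤ] ↥B) ⧸ rel R A B))

noncomputable instance (A B : ModuleCat.{u} R) : Module R (TT R A B) :=
  inferInstanceAs (Module R (((↥(Lambda R) ⊗[ℤ] ↥A) ⊗[ℤ] ↥B) ⧸ rel R A B))

/-- A morphism of `ModuleCat R`, viewed as a `ℤ`-linear map. -/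
def toIntHom {A B : ModuleCat.{u} R} (f : A ⟶ B) : ↥A →ₗ[ℤ] ↥B :=
  (LinearMap.toAddMonoidHom f.hom).toIntLinearMap

section Aux
set_option linter.unusedSectionVars false
variable {R}

lemma rho_one : rho R 1 = 𝟙 (ModuleCat.of R R) := by
  refine ModuleCat.hom_ext (LinearMap.ext fun t => ?_); exact mul_one (M := R) t

lemma rho_mul (r s : R) : rho R r ≫ rho R s = rho R (r * s) := by
  refine ModuleCat.hom_ext (LinearMap.ext fun t => ?_); exact mul_assoc (G := R) t r s

lemma rho_add (r s : R) : rho R (r + s) = rho R r + rho R s := by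
  refine ModuleCat.hom_ext (LinearMap.ext fun t => ?_); exact left_distrib (R := R) t r s

lemma odot1_one (x : ↥(Lambda R)) : odot1 R 1 x = x := by
  rw [odot1, rho_one, MonoidalCategory.id_whiskerRight]; rfl

lemma odot1_mul (r s : R) (x : ↥(Lambda R)) :
    odot1 R s (odot1 R r x) = odot1 R (r * s) x := by
  rw [odot1, odot1, odot1, ← rho_mul, MonoidalCategory.comp_whiskerRight]; rfl

lemma odot1_add (r : R) (x y : ↥(Lambda R)) :
    odot1 R r (x + y) = odot1 R r x + odot1 R r y :=
  map_add _ x y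

lemma odot1_addr (r s : R) (x : ↥(Lambda R)) :
    odot1 R (r + s) x = odot1 R r x + odot1 R s x := by
  rw [odot1, odot1, odot1, rho_add, MonoidalPreadditive.add_whiskerRight]
  rfl

lemma odot2_one (x : ↥(Lambda R)) : odot2 R 1 x = x := by
  rw [odot2, rho_one, MonoidalCategory.whiskerLeft_id]; rfl

lemma odot2_mul (r s : R) (x : ↥(Lambda R)) :
    odot2 R s (odot2 R r x) = odot2 R (r * s) x := by
  rw [odot2, odot2, odot2, ← rho_mul, MonoidalCategory.whiskerLeft_comp]; rfl

lemma odot2_add (r : R) (x y : ↥(Lambda R)) :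
    odot2 R r (x + y) = odot2 R r x + odot2 R r y :=
  map_add _ x y

lemma odot2_addr (r s : R) (x : ↥(Lambda R)) :
    odot2 R (r + s) x = odot2 R r x + odot2 R s x := by
  rw [odot2, odot2, odot2, rho_add, MonoidalPreadditive.whiskerLeft_add]
  rfl

lemma odot_comm (r s : R) (x : ↥(Lambda R)) :
    odot1 R r (odot2 R s x) = odot2 R s (odot1 R r x) := by
  rw [odot1, odot2, odot1, odot2]
  calc (rho R r ▷ ModuleCat.of R R) ((ModuleCat.of R R ◁ rho R s) x)
      = ((ModuleCat.of R R ◁ rho R s) ≫ (rho R r ▷ ModuleCat.of R R)) x := rfl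
    _ = ((rho R r ▷ ModuleCat.of R R) ≫ (ModuleCat.of R R ◁ rho R s)) x := by
        rw [MonoidalCategory.whisker_exchange]
    _ = _ := rfl

lemma odot1_smul (c r : R) (x : ↥(Lambda R)) :
    odot1 R r (c • x) = c • odot1 R r x :=
  map_smul _ c x

lemma odot2_smul (c r : R) (x : ↥(Lambda R)) :
    odot2 R r (c • x) = c • odot2 R r x :=
  map_smul _ c x

end Aux
section Aux2
set_option linter.unusedSectionVars false
variable {R}

/-- `t ↦ t • a` as a morphism `R ⟶ A`. -/
def hat (A : ModuleCat.{u} R) (a : ↥A) : ModuleCat.of R R ⟶ A :=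
  ModuleCat.ofHom
    { toFun := fun t => t • a
      map_add' := fun s t => add_smul s t a
      map_smul' := fun c t => mul_smul c t a }

lemma hat_apply (A : ModuleCat.{u} R) (a : ↥A) (t : R) : hat A a t = t • a := rfl

lemma hat_comp {A A' : ModuleCat.{u} R} (f : A ⟶ A') (a : ↥A) :
    hat A a ≫ f = hat A' (f a) := by
  refine ModuleCat.hom_ext (LinearMap.ext fun t => ?_)
  exact f.hom.map_smul t a

lemma hat_smul (A : ModuleCat.{u} R) (r : R) (a : ↥A) :
    hat A (r • a) = rho R r ≫ hat A a := by
  refine ModuleCat.hom_ext (LinearMap.ext fun t => ?_)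
  exact (mul_smul t r a).symm

lemma hat_add (A : ModuleCat.{u} R) (a a' : ↥A) :
    hat A (a + a') = hat A a + hat A a' := by
  refine ModuleCat.hom_ext (LinearMap.ext fun t => ?_)
  exact smul_add (M := R) t a a'

lemma hat_one (a : R) : hat (ModuleCat.of R R) a = rho R a := by
  refine ModuleCat.hom_ext (LinearMap.ext fun t => ?_)
  rfl

-- key composition lemmas
lemma tensor_hat_odot1 (A B : ModuleCat.{u} R) (r : R) (a : ↥A) (b : ↥B) :
    (rho R r ▷ ModuleCat.of R R) ≫ (hat A a ⊗ₘ hat B b) = hat A (r • a) ⊗ₘ hat B b := by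
  rw [hat_smul, ← MonoidalCategory.tensorHom_id, MonoidalCategory.tensorHom_comp_tensorHom,
    Category.id_comp]

lemma tensor_hat_odot2 (A B : ModuleCat.{u} R) (r : R) (a : ↥A) (b : ↥B) :
    (ModuleCat.of R R ◁ rho R r) ≫ (hat A a ⊗ₘ hat B b) = hat A a ⊗ₘ hat B (r • b) := by
  rw [hat_smul, ← MonoidalCategory.id_tensorHom, MonoidalCategory.tensorHom_comp_tensorHom,
    Category.id_comp]

/-- The trilinear core of `φ`. -/
noncomputable def phi1 (A B : ModuleCat.{u} R) (x : ↥(Lambda R)) (a : ↥A) :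
    ↥B →ₗ[ℤ] ↥(A ⊗ B) :=
  (AddMonoidHom.mk' (fun b => (hat A a ⊗ₘ hat B b) x) (by
    intro b b'
    show (hat A a ⊗ₘ hat B (b + b')) x = (hat A a ⊗ₘ hat B b) x + (hat A a ⊗ₘ hat B b') x
    rw [hat_add, MonoidalPreadditive.tensor_add]
    rfl)).toIntLinearMap

noncomputable def phi2 (A B : ModuleCat.{u} R) (x : ↥(Lambda R)) :
    ↥A →ₗ[ℤ] ↥B →ₗ[ℤ] ↥(A ⊗ B) :=
  (AddMonoidHom.mk' (fun a => phi1 A B x a) (by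
    intro a a'
    apply LinearMap.ext
    intro b
    show (hat A (a + a') ⊗ₘ hat B b) x = (hat A a ⊗ₘ hat B b) x + (hat A a' ⊗ₘ hat B b) x
    rw [hat_add, MonoidalPreadditive.add_tensor]
    rfl)).toIntLinearMap

noncomputable def phi3 (A B : ModuleCat.{u} R) :
    ↥(Lambda R) →ₗ[ℤ] ↥A →ₗ[ℤ] ↥B →ₗ[ℤ] ↥(A ⊗ B) :=
  (AddMonoidHom.mk' (fun x => phi2 A B x) (by
    intro x x'
    apply LinearMap.ext
    intro a
    apply LinearMap.ext
    intro b
    show (hat A a ⊗ₘ hat B b) (x + x') = (hat A a ⊗ₘ hat B b) x + (hat A a ⊗ₘ hat B b) x'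
    exact map_add _ x x')).toIntLinearMap

lemma phi3_apply (A B : ModuleCat.{u} R) (x : ↥(Lambda R)) (a : ↥A) (b : ↥B) :
    phi3 A B x a b = (hat A a ⊗ₘ hat B b) x := rfl

noncomputable def phi0 (A B : ModuleCat.{u} R) :
    ((↥(Lambda R) ⊗[ℤ] ↥A) ⊗[ℤ] ↥B) →ₗ[ℤ] ↥(A ⊗ B) :=
  TensorProduct.lift (TensorProduct.lift (phi3 A B))

lemma phi0_tmul (A B : ModuleCat.{u} R) (x : ↥(Lambda R)) (a : ↥A) (b : ↥B) :
    phi0 A B ((x ⊗ₜ[ℤ] a) ⊗ₜ[ℤ] b) = (hat A a ⊗ₘ hat B b) x := rfl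

lemma phi0_smul (A B : ModuleCat.{u} R) (c : R) (z : (↥(Lambda R) ⊗[ℤ] ↥A) ⊗[ℤ] ↥B) :
    phi0 A B (c • z) = c • phi0 A B z := by
  induction z using TensorProduct.induction_on with
  | zero => rw [smul_zero, map_zero, smul_zero]
  | add z w hz hw => rw [smul_add, map_add, map_add, hz, hw, smul_add]
  | tmul y b =>
    induction y using TensorProduct.induction_on with
    | zero => rw [TensorProduct.zero_tmul, smul_zero, map_zero, smul_zero]
    | add y y' hy hy' =>
      rw [TensorProduct.add_tmul, smul_add, map_add, hy, hy', map_add, smul_add]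
    | tmul x a =>
      rw [TensorProduct.smul_tmul', TensorProduct.smul_tmul', phi0_tmul, phi0_tmul]
      exact map_smul (hat A a ⊗ₘ hat B b).hom c x

/-- `φ` before descending to the quotient, as an `R`-linear map. -/
noncomputable def phiPre (A B : ModuleCat.{u} R) :
    ((↥(Lambda R) ⊗[ℤ] ↥A) ⊗[ℤ] ↥B) →ₗ[R] ↥(A ⊗ B) :=
  { toFun := phi0 A B
    map_add' := (phi0 A B).map_add
    map_smul' := phi0_smul A B }

lemma rel_le_ker (A B : ModuleCat.{u} R) : _root_.rel R A B ≤ LinearMap.ker (phiPre A B) := by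
  refine Submodule.span_le.2 ?_
  rintro z (⟨r, x, a, b, rfl⟩ | ⟨r, x, a, b, rfl⟩) <;>
    simp only [SetLike.mem_coe, LinearMap.mem_ker, map_sub, phiPre, LinearMap.coe_mk,
      AddHom.coe_mk, phi0_tmul, sub_eq_zero]
  · calc (hat A a ⊗ₘ hat B b) (odot1 R r x)
        = ((rho R r ▷ ModuleCat.of R R) ≫ (hat A a ⊗ₘ hat B b)) x := rfl
      _ = (hat A (r • a) ⊗ₘ hat B b) x := by rw [tensor_hat_odot1]
  · calc (hat A a ⊗ₘ hat B b) (odot2 R r x)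
        = ((ModuleCat.of R R ◁ rho R r) ≫ (hat A a ⊗ₘ hat B b)) x := rfl
      _ = (hat A a ⊗ₘ hat B (r • b)) x := by rw [tensor_hat_odot2]

/-- The natural comparison map `TT R A B → A ⊗ B`. -/
noncomputable def phiQ (A B : ModuleCat.{u} R) : TT R A B →ₗ[R] ↥(A ⊗ B) :=
  Submodule.liftQ (rel R A B) (phiPre A B) (rel_le_ker A B)

lemma phiQ_mk (A B : ModuleCat.{u} R) (x : ↥(Lambda R)) (a : ↥A) (b : ↥B) :
    phiQ A B (Submodule.Quotient.mk ((x ⊗ₜ[ℤ] a) ⊗ₜ[ℤ] b)) = (hat A a ⊗ₘ hat B b) x := rfl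

end Aux2
section Aux3
set_option linter.unusedSectionVars false
variable {R}

lemma mk_odot1 {A B : ModuleCat.{u} R} (r : R) (x : ↥(Lambda R)) (a : ↥A) (b : ↥B) :
    (Submodule.Quotient.mk ((odot1 R r x ⊗ₜ[ℤ] a) ⊗ₜ[ℤ] b) : TT R A B) =
      Submodule.Quotient.mk ((x ⊗ₜ[ℤ] (r • a)) ⊗ₜ[ℤ] b) :=
  (Submodule.Quotient.eq _).2 (Submodule.subset_span (Or.inl ⟨r, x, a, b, rfl⟩))

lemma mk_odot2 {A B : ModuleCat.{u} R} (r : R) (x : ↥(Lambda R)) (a : ↥A) (b : ↥B) :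
    (Submodule.Quotient.mk ((odot2 R r x ⊗ₜ[ℤ] a) ⊗ₜ[ℤ] b) : TT R A B) =
      Submodule.Quotient.mk ((x ⊗ₜ[ℤ] a) ⊗ₜ[ℤ] (r • b)) :=
  (Submodule.Quotient.eq _).2 (Submodule.subset_span (Or.inr ⟨r, x, a, b, rfl⟩))

lemma TT_induction {A B : ModuleCat.{u} R} {P : TT R A B → Prop}
    (h0 : P 0) (hadd : ∀ s t, P s → P t → P (s + t))
    (htmul : ∀ (x : ↥(Lambda R)) (a : ↥A) (b : ↥B),
      P (Submodule.Quotient.mk ((x ⊗ₜ[ℤ] a) ⊗ₜ[ℤ] b))) :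
    ∀ t, P t := by
  intro t
  obtain ⟨z, rfl⟩ := Submodule.Quotient.mk_surjective _ t
  induction z using TensorProduct.induction_on with
  | zero => rw [Submodule.Quotient.mk_zero]; exact h0
  | add z w hz hw => rw [Submodule.Quotient.mk_add]; exact hadd _ _ hz hw
  | tmul y b =>
    induction y using TensorProduct.induction_on with
    | zero => rw [TensorProduct.zero_tmul, Submodule.Quotient.mk_zero]; exact h0
    | add y y' hy hy' =>
      rw [TensorProduct.add_tmul, Submodule.Quotient.mk_add]; exact hadd _ _ hy hy'
    | tmul x a => exact htmul x a b

lemma TT_hom_ext {A B : ModuleCat.{u} R} {C : Type u} [AddCommGroup C] [Module R C]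
    {f g : TT R A B →ₗ[R] C}
    (h : ∀ (x : ↥(Lambda R)) (a : ↥A) (b : ↥B),
      f (Submodule.Quotient.mk ((x ⊗ₜ[ℤ] a) ⊗ₜ[ℤ] b)) =
        g (Submodule.Quotient.mk ((x ⊗ₜ[ℤ] a) ⊗ₜ[ℤ] b))) : f = g := by
  apply LinearMap.ext
  refine TT_induction (by simp) (fun s t hs ht => ?_) h
  rw [map_add, map_add, hs, ht]

/-- The underlying `ℤ`-linear map of `TTmap`. -/
noncomputable def TTmap0 {A A' B B' : ModuleCat.{u} R} (f : A ⟶ A') (g : B ⟶ B') :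
    ((↥(Lambda R) ⊗[ℤ] ↥A) ⊗[ℤ] ↥B) →ₗ[ℤ] ((↥(Lambda R) ⊗[ℤ] ↥A') ⊗[ℤ] ↥B') :=
  TensorProduct.map (TensorProduct.map LinearMap.id (toIntHom R f)) (toIntHom R g)

lemma TTmap0_tmul {A A' B B' : ModuleCat.{u} R} (f : A ⟶ A') (g : B ⟶ B')
    (x : ↥(Lambda R)) (a : ↥A) (b : ↥B) :
    TTmap0 f g ((x ⊗ₜ[ℤ] a) ⊗ₜ[ℤ] b) = (x ⊗ₜ[ℤ] f a) ⊗ₜ[ℤ] g b := rfl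

lemma TTmap0_smul {A A' B B' : ModuleCat.{u} R} (f : A ⟶ A') (g : B ⟶ B') (c : R)
    (z : (↥(Lambda R) ⊗[ℤ] ↥A) ⊗[ℤ] ↥B) :
    TTmap0 f g (c • z) = c • TTmap0 f g z := by
  induction z using TensorProduct.induction_on with
  | zero => rw [smul_zero, map_zero, smul_zero]
  | add z w hz hw => rw [smul_add, map_add, map_add, hz, hw, smul_add]
  | tmul y b =>
    induction y using TensorProduct.induction_on with
    | zero => rw [TensorProduct.zero_tmul, smul_zero, map_zero, smul_zero]
    | add y y' hy hy' =>
      rw [TensorProduct.add_tmul, smul_add, map_add, hy, hy', map_add, smul_add]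
    | tmul x a =>
      rw [TensorProduct.smul_tmul', TensorProduct.smul_tmul', TTmap0_tmul, TTmap0_tmul,
        TensorProduct.smul_tmul', TensorProduct.smul_tmul']

/-- Functoriality of `TT`. -/
noncomputable def TTmap {A A' B B' : ModuleCat.{u} R} (f : A ⟶ A') (g : B ⟶ B') :
    TT R A B →ₗ[R] TT R A' B' :=
  Submodule.liftQ (rel R A B)
    ((rel R A' B').mkQ ∘ₗ
      { toFun := TTmap0 f g
        map_add' := (TTmap0 f g).map_add
        map_smul' := TTmap0_smul f g })
    (by
      refine Submodule.span_le.2 ?_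
      rintro z (⟨r, x, a, b, rfl⟩ | ⟨r, x, a, b, rfl⟩) <;>
        simp only [SetLike.mem_coe, LinearMap.mem_ker, LinearMap.comp_apply, map_sub,
          LinearMap.coe_mk, AddHom.coe_mk, Submodule.mkQ_apply, TTmap0_tmul]
      · rw [sub_eq_zero]
        show (Submodule.Quotient.mk ((odot1 R r x ⊗ₜ[ℤ] f a) ⊗ₜ[ℤ] g b) : TT R A' B')
            = Submodule.Quotient.mk ((x ⊗ₜ[ℤ] f (r • a)) ⊗ₜ[ℤ] g b)
        rw [mk_odot1, show f (r • a) = r • f a from map_smul f.hom r a]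
      · rw [sub_eq_zero]
        show (Submodule.Quotient.mk ((odot2 R r x ⊗ₜ[ℤ] f a) ⊗ₜ[ℤ] g b) : TT R A' B')
            = Submodule.Quotient.mk ((x ⊗ₜ[ℤ] f a) ⊗ₜ[ℤ] g (r • b))
        rw [mk_odot2, show g (r • b) = r • g b from map_smul g.hom r b])

lemma TTmap_mk {A A' B B' : ModuleCat.{u} R} (f : A ⟶ A') (g : B ⟶ B')
    (z : (↥(Lambda R) ⊗[ℤ] ↥A) ⊗[ℤ] ↥B) :
    TTmap f g (Submodule.Quotient.mk z) = Submodule.Quotient.mk (TTmap0 f g z) := rfl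

lemma TT_mk_add {A B : ModuleCat.{u} R} (z w : (↥(Lambda R) ⊗[ℤ] ↥A) ⊗[ℤ] ↥B) :
    (Submodule.Quotient.mk (z + w) : TT R A B) =
      @HAdd.hAdd (TT R A B) (TT R A B) (TT R A B) _
        (Submodule.Quotient.mk z) (Submodule.Quotient.mk w) :=
  Submodule.Quotient.mk_add _

lemma phiQ_mk_add {A B : ModuleCat.{u} R} (z w : (↥(Lambda R) ⊗[ℤ] ↥A) ⊗[ℤ] ↥B) :
    phiQ A B (Submodule.Quotient.mk (z + w)) =
      phiQ A B (Submodule.Quotient.mk z) + phiQ A B (Submodule.Quotient.mk w) := by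
  rw [TT_mk_add]; exact map_add (phiQ A B) _ _

/-- Naturality of `φ`. -/
lemma phi_nat {A A' B B' : ModuleCat.{u} R} (f : A ⟶ A') (g : B ⟶ B')
    (z : (↥(Lambda R) ⊗[ℤ] ↥A) ⊗[ℤ] ↥B) :
    phiQ A' B' (Submodule.Quotient.mk (TTmap0 f g z)) =
      (f ⊗ₘ g) (phiQ A B (Submodule.Quotient.mk z)) := by
  induction z using TensorProduct.induction_on with
  | zero => rw [map_zero]; exact (map_zero _).trans (map_zero _).symm
  | add z w hz hw =>
    rw [map_add, phiQ_mk_add, hz, hw, phiQ_mk_add,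
      map_add]
  | tmul y b =>
    induction y using TensorProduct.induction_on with
    | zero => rw [TensorProduct.zero_tmul, map_zero]; exact (map_zero _).trans (map_zero _).symm
    | add y y' hy hy' =>
      rw [TensorProduct.add_tmul, map_add, phiQ_mk_add, hy, hy',
        phiQ_mk_add, map_add]
    | tmul x a =>
      rw [TTmap0_tmul, phiQ_mk, phiQ_mk]
      calc (hat A' (f a) ⊗ₘ hat B' (g b)) x
          = ((hat A a ≫ f) ⊗ₘ (hat B b ≫ g)) x := by rw [hat_comp, hat_comp]
        _ = ((hat A a ⊗ₘ hat B b) ≫ (f ⊗ₘ g)) x := by rw [← MonoidalCategory.tensorHom_comp_tensorHom]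
        _ = (f ⊗ₘ g) ((hat A a ⊗ₘ hat B b) x) := rfl

end Aux3
section Aux4
set_option linter.unusedSectionVars false
variable {R}

lemma TTmap_id {A B : ModuleCat.{u} R} : TTmap (𝟙 A) (𝟙 B) = LinearMap.id := by
  exact TT_hom_ext (fun x a b => rfl)

lemma TTmap_comp {A A' A'' B B' B'' : ModuleCat.{u} R}
    (f : A ⟶ A') (f' : A' ⟶ A'') (g : B ⟶ B') (g' : B' ⟶ B'') :
    TTmap (f ≫ f') (g ≫ g') = (TTmap f' g').comp (TTmap f g) :=
  TT_hom_ext (fun x a b => rfl)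

lemma TTmap_surj {A A' B B' : ModuleCat.{u} R} (f : A ⟶ A') (g : B ⟶ B')
    (hf : Function.Surjective f) (hg : Function.Surjective g) :
    Function.Surjective (TTmap f g) := by
  intro t
  have : t ∈ LinearMap.range (TTmap f g) := by
    refine TT_induction (Submodule.zero_mem _) (fun s t hs ht => Submodule.add_mem _ hs ht)
      (fun x a' b' => ?_) t
    obtain ⟨a, rfl⟩ := hf a'
    obtain ⟨b, rfl⟩ := hg b'
    exact ⟨Submodule.Quotient.mk ((x ⊗ₜ[ℤ] a) ⊗ₜ[ℤ] b), rfl⟩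
  exact this

/-- `1 : R` as an element of the module `of R R`. -/
def oneE : ↥(ModuleCat.of R R) := (1 : R)

/-- The inverse of `φ` in the base case `A = B = R`. -/
noncomputable def psi :
    ↥(ModuleCat.of R R ⊗ ModuleCat.of R R) →ₗ[R]
      TT R (ModuleCat.of R R) (ModuleCat.of R R) :=
  { toFun := fun y =>
      Submodule.Quotient.mk ((y ⊗ₜ[ℤ] (oneE : ↥(ModuleCat.of R R))) ⊗ₜ[ℤ] (oneE : ↥(ModuleCat.of R R)))
    map_add' := by
      intro y y'
      show Submodule.Quotient.mk (((y + y') ⊗ₜ[ℤ] (oneE : ↥(ModuleCat.of R R))) ⊗ₜ[ℤ]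
        (oneE : ↥(ModuleCat.of R R))) = _
      rw [TensorProduct.add_tmul, TensorProduct.add_tmul, Submodule.Quotient.mk_add]
      rfl
    map_smul' := by
      intro c y
      simp only [RingHom.id_apply]
      rw [← TensorProduct.smul_tmul', ← TensorProduct.smul_tmul']
      rfl }

lemma phi_psi (y : ↥(ModuleCat.of R R ⊗ ModuleCat.of R R)) :
    phiQ (ModuleCat.of R R) (ModuleCat.of R R) (psi y) = y := by
  show phiQ _ _ (Submodule.Quotient.mk (((y : ↥(Lambda R)) ⊗ₜ[ℤ] (oneE : ↥(ModuleCat.of R R))) ⊗ₜ[ℤ] (oneE : ↥(ModuleCat.of R R)))) = y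
  rw [phiQ_mk, hat_one, show rho R (oneE : ↥(ModuleCat.of R R)) = 𝟙 (ModuleCat.of R R) from rho_one,
    MonoidalCategory.id_tensorHom_id]
  rfl

lemma psi_phi (t : TT R (ModuleCat.of R R) (ModuleCat.of R R)) :
    psi (phiQ (ModuleCat.of R R) (ModuleCat.of R R) t) = t := by
  have h : psi.comp (phiQ (ModuleCat.of R R) (ModuleCat.of R R)) = LinearMap.id := by
    refine TT_hom_ext (fun x a b => ?_)
    have h1 : (hat (ModuleCat.of R R) a ⊗ₘ hat (ModuleCat.of R R) b) x
        = odot2 R b (odot1 R a x) := by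
      rw [hat_one, hat_one, MonoidalCategory.tensorHom_def]
      rfl
    show psi (phiQ _ _ (Submodule.Quotient.mk ((x ⊗ₜ[ℤ] a) ⊗ₜ[ℤ] b))) = _
    rw [phiQ_mk, h1]
    have hb : (show R from b) • (oneE : ↥(ModuleCat.of R R)) = b := mul_one (M := R) b
    have ha : (show R from a) • (oneE : ↥(ModuleCat.of R R)) = a := mul_one (M := R) a
    calc (Submodule.Quotient.mk ((odot2 R b (odot1 R a x) ⊗ₜ[ℤ] (oneE : ↥(ModuleCat.of R R)))
            ⊗ₜ[ℤ] (oneE : ↥(ModuleCat.of R R)))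
          : TT R (ModuleCat.of R R) (ModuleCat.of R R))
        = Submodule.Quotient.mk ((odot1 R a x ⊗ₜ[ℤ] (oneE : ↥(ModuleCat.of R R)))
            ⊗ₜ[ℤ] ((show R from b) • (oneE : ↥(ModuleCat.of R R)))) :=
          mk_odot2 (show R from b) (odot1 R a x) oneE oneE
      _ = Submodule.Quotient.mk ((odot1 R a x ⊗ₜ[ℤ] (oneE : ↥(ModuleCat.of R R))) ⊗ₜ[ℤ] b) := by
          rw [hb]
      _ = Submodule.Quotient.mk ((x ⊗ₜ[ℤ] ((show R from a) • (oneE : ↥(ModuleCat.of R R)))) ⊗ₜ[ℤ] b) :=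
          mk_odot1 (show R from a) x oneE b
      _ = Submodule.Quotient.mk ((x ⊗ₜ[ℤ] a) ⊗ₜ[ℤ] b) := by rw [ha]
  exact LinearMap.congr_fun h t

lemma phiRR_bij :
    Function.Bijective (phiQ (ModuleCat.of R R) (ModuleCat.of R R)) :=
  ⟨fun t t' h => by rw [← psi_phi t, h, psi_phi], fun y => ⟨psi y, phi_psi y⟩⟩

end Aux4
section EW
set_option linter.unusedSectionVars false
open CategoryTheory.Limits
variable {R}

/-- The cofan exhibiting `ι →₀ R` as a coproduct of copies of `R`. -/
noncomputable def freeCofan (ι : Type u) : Cofan (fun _ : ι => ModuleCat.of R R) :=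
  Cofan.mk (ModuleCat.of R (ι →₀ R)) (fun i => ModuleCat.ofHom (Finsupp.lsingle i))

noncomputable def freeCofanIsColimit (ι : Type u) : IsColimit (freeCofan (R := R) ι) :=
  mkCofanColimit _
    (fun t => ModuleCat.ofHom (Finsupp.lsum ℕ (fun i => (t.inj i).hom)))
    (fun t i => by
      apply ModuleCat.hom_ext
      apply LinearMap.ext
      intro r
      show Finsupp.lsum ℕ (fun i => (t.inj i).hom) (Finsupp.single i r) = t.inj i r
      rw [Finsupp.lsum_single])
    (fun t m hm => by
      apply ModuleCat.hom_ext
      apply Finsupp.lhom_ext'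
      intro i
      apply LinearMap.ext
      intro r
      have h1 : m ((Finsupp.single i r : ι →₀ R)) = t.inj i r := by
        have := hm i
        calc m ((Finsupp.single i r : ι →₀ R))
            = ((freeCofan (R := R) ι).inj i ≫ m) r := rfl
          _ = t.inj i r := by rw [this]
      have h2 : (ModuleCat.ofHom (Finsupp.lsum ℕ (fun i => (t.inj i).hom)))
          ((Finsupp.single i r : ι →₀ R)) = t.inj i r := by
        show Finsupp.lsum ℕ (fun i => (t.inj i).hom) (Finsupp.single i r) = t.inj i r
        rw [Finsupp.lsum_single]
      exact h1.trans h2.symm)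

theorem EW
    (F : ModuleCat.{u} R ⥤ ModuleCat.{u} R)
    [PreservesColimitsOfSize.{u, u} F] [PreservesColimitsOfSize.{0, 0} F]
    [F.Additive]
    (G : ModuleCat.{u} R → ModuleCat.{u} R)
    (Gmap : ∀ {A A' : ModuleCat.{u} R}, (A ⟶ A') → (G A ⟶ G A'))
    (Gcomp : ∀ {A A' A'' : ModuleCat.{u} R} (f : A ⟶ A') (f' : A' ⟶ A''),
      Gmap (f ≫ f') = Gmap f ≫ Gmap f')
    (Gzero : ∀ {A A' : ModuleCat.{u} R}, Gmap (0 : A ⟶ A') = 0)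
    (Gsurj : ∀ {A A' : ModuleCat.{u} R} (f : A ⟶ A'), Function.Surjective f →
      Function.Surjective (Gmap f))
    (Gspan : ∀ (ι : Type u) (t : ↥(G (ModuleCat.of R (ι →₀ R)))),
      t ∈ ⨆ i : ι, LinearMap.range
        ((Gmap (ModuleCat.ofHom (Finsupp.lsingle i)) :
          G (ModuleCat.of R R) ⟶ G (ModuleCat.of R (ι →₀ R))).hom))
    (τ : ∀ A : ModuleCat.{u} R, G A ⟶ F.obj A)
    (τnat : ∀ {A A' : ModuleCat.{u} R} (f : A ⟶ A'), Gmap f ≫ τ A' = τ A ≫ F.map f)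
    (τR : Function.Bijective (τ (ModuleCat.of R R)))
    (A : ModuleCat.{u} R) : Function.Bijective (τ A) := by
  classical
  -- Step 1: the free case
  have hfree : ∀ ι : Type u, Function.Bijective (τ (ModuleCat.of R (ι →₀ R))) := by
    intro ι
    set F0 := ModuleCat.of R (ι →₀ R) with hF0
    let e : ∀ i : ι, ModuleCat.of R R ⟶ F0 := fun i => ModuleCat.ofHom (Finsupp.lsingle i)
    have hc := freeCofanIsColimit (R := R) ι
    have hFc : IsColimit (F.mapCocone (freeCofan (R := R) ι)) := isColimitOfPreserves F hc
    let eR := LinearEquiv.ofBijective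
      (τ (ModuleCat.of R R)).hom τR
    let τRinv : F.obj (ModuleCat.of R R) ⟶ G (ModuleCat.of R R) := ModuleCat.ofHom eR.symm.toLinearMap
    have hinv1 : τRinv ≫ τ (ModuleCat.of R R) = 𝟙 _ := by
      apply ModuleCat.hom_ext; apply LinearMap.ext; intro y; exact eR.apply_symm_apply y
    let myc : Cocone ((Discrete.functor fun _ : ι => ModuleCat.of R R) ⋙ F) :=
      { pt := G F0, ι := Discrete.natTrans (fun i => τRinv ≫ Gmap (e i.as)) }
    let s : F.obj F0 ⟶ G F0 := hFc.desc myc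
    have hfac : ∀ i : ι, F.map (e i) ≫ s = τRinv ≫ Gmap (e i) := fun i => hFc.fac myc ⟨i⟩
    have h1 : s ≫ τ F0 = 𝟙 (F.obj F0) := by
      refine hFc.hom_ext fun ⟨i⟩ => ?_
      show F.map (e i) ≫ s ≫ τ F0 = F.map (e i) ≫ 𝟙 _
      rw [Category.comp_id, ← Category.assoc, hfac i, Category.assoc, τnat (e i),
        ← Category.assoc, hinv1, Category.id_comp]
    have h2 : ∀ x, s (τ F0 x) = x := by
      intro x
      refine Submodule.iSup_induction (motive := fun x => s (τ F0 x) = x) _ (Gspan ι x)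
        (fun i y hy => ?_) (by show s (τ F0 0) = 0; rw [map_zero, map_zero])
        (fun a b ha hb => by
          show s (τ F0 (a + b)) = a + b
          rw [map_add, map_add, ha, hb])
      obtain ⟨z, rfl⟩ := hy
      show s (τ F0 (Gmap (e i) z)) = Gmap (e i) z
      have hτ : τ F0 (Gmap (e i) z) = F.map (e i) (τ (ModuleCat.of R R) z) :=
        ConcreteCategory.congr_hom (τnat (e i)) z
      rw [hτ]
      have h3 : s (F.map (e i) (τ (ModuleCat.of R R) z))
          = Gmap (e i) (τRinv (τ (ModuleCat.of R R) z)) :=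
        ConcreteCategory.congr_hom (hfac i) (τ (ModuleCat.of R R) z)
      rw [h3]
      have h4 : τRinv (τ (ModuleCat.of R R) z) = z := eR.symm_apply_apply z
      rw [h4]
    constructor
    · intro a b hab
      have := congrArg s hab
      rwa [h2, h2] at this
    · intro y
      exact ⟨s y, ConcreteCategory.congr_hom h1 y⟩
  -- Step 2: general case via a free presentation
  let p0 : (↥A →₀ R) →ₗ[R] ↥A := Finsupp.linearCombination R _root_.id
  have hp0 : Function.Surjective p0 := Finsupp.linearCombination_id_surjective R ↥A
  let F0 : ModuleCat.{u} R := ModuleCat.of R (↥A →₀ R)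
  let p : F0 ⟶ A := ModuleCat.ofHom p0
  let K := LinearMap.ker p0
  let d0 : (↥K →₀ R) →ₗ[R] (↥A →₀ R) :=
    Finsupp.linearCombination R (fun k : ↥K => (k : ↥A →₀ R))
  have hd0 : LinearMap.range d0 = K := by
    rw [Finsupp.range_linearCombination]
    have hrc : (Set.range fun k : ↥K => (k : ↥A →₀ R)) = (K : Set (↥A →₀ R)) :=
      Subtype.range_coe
    rw [hrc, Submodule.span_eq]
  let F1 : ModuleCat.{u} R := ModuleCat.of R (↥K →₀ R)
  let d : F1 ⟶ F0 := ModuleCat.ofHom d0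
  have hdp : d ≫ p = 0 := by
    apply ModuleCat.hom_ext
    apply LinearMap.ext
    intro z
    have hz : d0 z ∈ K := (le_of_eq hd0) (LinearMap.mem_range_self d0 z)
    exact hz
  have hEpiP : Epi p := (ModuleCat.epi_iff_surjective p).2 hp0
  have hcolim : IsColimit (CokernelCofork.ofπ p hdp) := by
    refine CokernelCofork.IsColimit.ofπ' p hdp (fun {C} k hk => ?_)
    have hker : K ≤ LinearMap.ker k.hom := by
      refine le_trans (ge_of_eq hd0) ?_
      rintro _ ⟨z, rfl⟩
      exact ConcreteCategory.congr_hom hk z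
    refine ⟨ModuleCat.ofHom ((K.liftQ k.hom hker).comp
      (p0.quotKerEquivOfSurjective hp0).symm.toLinearMap), ?_⟩
    apply ModuleCat.hom_ext
    apply LinearMap.ext
    intro x
    show (K.liftQ k.hom hker)
      ((p0.quotKerEquivOfSurjective hp0).symm (p0 x)) = k x
    have hsy : (p0.quotKerEquivOfSurjective hp0).symm (p0 x) = Submodule.Quotient.mk x := by
      apply (p0.quotKerEquivOfSurjective hp0).injective
      rw [LinearEquiv.apply_symm_apply]
      show p0 x = (p0.quotKerEquivOfSurjective hp0) (Submodule.Quotient.mk x)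
      simp [LinearMap.quotKerEquivOfSurjective, LinearMap.quotKerEquivRange_apply_mk]
    rw [hsy]
    rfl
  have hF' : IsColimit ((CokernelCofork.ofπ p hdp).map F) :=
    CokernelCofork.mapIsColimit _ hcolim F
  have hepiF : Epi (F.map p) := ⟨fun g h w => Cofork.IsColimit.hom_ext hF' w⟩
  have hb0 : Function.Bijective (τ F0) := hfree (↥A)
  have hb1 : Function.Bijective (τ F1) := hfree (↥K)
  let e0 := LinearEquiv.ofBijective (τ F0).hom hb0
  let e1 := LinearEquiv.ofBijective (τ F1).hom hb1
  let τ0inv : F.obj F0 ⟶ G F0 := ModuleCat.ofHom e0.symm.toLinearMap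
  let τ1inv : F.obj F1 ⟶ G F1 := ModuleCat.ofHom e1.symm.toLinearMap
  have hi0 : τ0inv ≫ τ F0 = 𝟙 _ := by
    apply ModuleCat.hom_ext; apply LinearMap.ext; intro y; exact e0.apply_symm_apply y
  have hi0' : τ F0 ≫ τ0inv = 𝟙 _ := by
    apply ModuleCat.hom_ext; apply LinearMap.ext; intro y; exact e0.symm_apply_apply y
  have hi1 : τ1inv ≫ τ F1 = 𝟙 _ := by
    apply ModuleCat.hom_ext; apply LinearMap.ext; intro y; exact e1.apply_symm_apply y
  have hnat : F.map d ≫ τ0inv = τ1inv ≫ Gmap d := by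
    have hτd := τnat d
    calc F.map d ≫ τ0inv
        = τ1inv ≫ (τ F1 ≫ F.map d) ≫ τ0inv := by
          simp only [← Category.assoc]
          rw [hi1, Category.id_comp]
      _ = τ1inv ≫ (Gmap d ≫ τ F0) ≫ τ0inv := by rw [← hτd]
      _ = τ1inv ≫ Gmap d ≫ (τ F0 ≫ τ0inv) := by simp only [Category.assoc]
      _ = τ1inv ≫ Gmap d := by rw [hi0', Category.comp_id]
  let m : F.obj F0 ⟶ G A := τ0inv ≫ Gmap p
  have hm : F.map d ≫ m = 0 := by
    show F.map d ≫ τ0inv ≫ Gmap p = 0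
    rw [← Category.assoc, hnat, Category.assoc, ← Gcomp, hdp, Gzero, Limits.comp_zero]
  obtain ⟨u, hu1, -⟩ : ∃! u : F.obj A ⟶ G A, F.map p ≫ u = m := Cofork.IsColimit.existsUnique hF' m (by rw [hm, zero_comp])
  have hu1' : F.map p ≫ u = m := hu1
  have hR : u ≫ τ A = 𝟙 (F.obj A) := by
    rw [← cancel_epi (F.map p)]
    calc F.map p ≫ u ≫ τ A = (F.map p ≫ u) ≫ τ A := by rw [Category.assoc]
      _ = τ0inv ≫ (Gmap p ≫ τ A) := by rw [hu1', Category.assoc]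
      _ = τ0inv ≫ τ F0 ≫ F.map p := by rw [τnat p]
      _ = F.map p := by rw [← Category.assoc, hi0, Category.id_comp]
      _ = F.map p ≫ 𝟙 _ := (Category.comp_id _).symm
  have hL : ∀ t, u (τ A t) = t := by
    intro t
    obtain ⟨y, rfl⟩ := Gsurj p hp0 t
    have h1' : τ A (Gmap p y) = F.map p (τ F0 y) := ConcreteCategory.congr_hom (τnat p) y
    rw [h1']
    have h2' : u (F.map p (τ F0 y)) = m (τ F0 y) := ConcreteCategory.congr_hom hu1' (τ F0 y)
    rw [h2']
    have h3' : m (τ F0 y) = Gmap p (τ0inv (τ F0 y)) := rfl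
    rw [h3']
    have h4' : τ0inv (τ F0 y) = y := e0.symm_apply_apply y
    rw [h4']
  constructor
  · intro a b hab
    have := congrArg u hab
    rwa [hL, hL] at this
  · intro z
    exact ⟨u z, ConcreteCategory.congr_hom hR z⟩

end EW
section Apps
set_option linter.unusedSectionVars false
open CategoryTheory.Limits
variable {R}

lemma TTmap_zeroB {A B B' : ModuleCat.{u} R} : TTmap (𝟙 A) (0 : B ⟶ B') = 0 := by
  refine TT_hom_ext (fun x a b => ?_)
  show (Submodule.Quotient.mk ((x ⊗ₜ[ℤ] a) ⊗ₜ[ℤ] (0 : ↥B'))) = (0 : TT R A B')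
  rw [TensorProduct.tmul_zero, Submodule.Quotient.mk_zero]
  rfl

lemma TTmap_zeroA {A A' B : ModuleCat.{u} R} : TTmap (0 : A ⟶ A') (𝟙 B) = 0 := by
  refine TT_hom_ext (fun x a b => ?_)
  show (Submodule.Quotient.mk ((x ⊗ₜ[ℤ] (0 : ↥A')) ⊗ₜ[ℤ] b)) = (0 : TT R A' B)
  rw [TensorProduct.tmul_zero, TensorProduct.zero_tmul, Submodule.Quotient.mk_zero]
  rfl

lemma single_eq_smul (ι : Type u) (i : ι) (r : R) :
    (Finsupp.single i r : ι →₀ R) = r • (Finsupp.single i (1 : R)) := by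
  rw [Finsupp.smul_single, smul_eq_mul, mul_one]

lemma span_B (A : ModuleCat.{u} R) (ι : Type u)
    (t : TT R A (ModuleCat.of R (ι →₀ R))) :
    t ∈ ⨆ i : ι, LinearMap.range
      (TTmap (R := R) (𝟙 A) (ModuleCat.ofHom (Finsupp.lsingle i))) := by
  refine TT_induction (Submodule.zero_mem _) (fun a b ha hb => Submodule.add_mem _ ha hb)
    (fun x a f => ?_) t
  induction f using Finsupp.induction with
  | zero =>
    rw [TensorProduct.tmul_zero, Submodule.Quotient.mk_zero]
    exact Submodule.zero_mem _
  | single_add i r f hif hr ih =>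
    rw [TensorProduct.tmul_add, Submodule.Quotient.mk_add]
    refine Submodule.add_mem _ ?_ ih
    refine Submodule.mem_iSup_of_mem i ⟨Submodule.Quotient.mk
      ((odot2 R r x ⊗ₜ[ℤ] a) ⊗ₜ[ℤ] (oneE : ↥(ModuleCat.of R R))), ?_⟩
    rw [TTmap_mk]
    show (Submodule.Quotient.mk ((odot2 R r x ⊗ₜ[ℤ] a) ⊗ₜ[ℤ]
        (Finsupp.single i (1 : R) : ι →₀ R)) : TT R A (ModuleCat.of R (ι →₀ R)))
      = Submodule.Quotient.mk ((x ⊗ₜ[ℤ] a) ⊗ₜ[ℤ] (Finsupp.single i r : ι →₀ R))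
    refine (mk_odot2 (A := A) (B := ModuleCat.of R (ι →₀ R)) r x a (Finsupp.single i (1 : R))).trans ?_
    rw [← single_eq_smul]

lemma span_A (B : ModuleCat.{u} R) (ι : Type u)
    (t : TT R (ModuleCat.of R (ι →₀ R)) B) :
    t ∈ ⨆ i : ι, LinearMap.range
      (TTmap (R := R) (ModuleCat.ofHom (Finsupp.lsingle i)) (𝟙 B)) := by
  refine TT_induction (Submodule.zero_mem _) (fun a b ha hb => Submodule.add_mem _ ha hb)
    (fun x f b => ?_) t
  induction f using Finsupp.induction with
  | zero =>
    rw [TensorProduct.tmul_zero, TensorProduct.zero_tmul, Submodule.Quotient.mk_zero]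
    exact Submodule.zero_mem _
  | single_add i r f hif hr ih =>
    rw [TensorProduct.tmul_add, TensorProduct.add_tmul, Submodule.Quotient.mk_add]
    refine Submodule.add_mem _ ?_ ih
    refine Submodule.mem_iSup_of_mem i ⟨Submodule.Quotient.mk
      ((odot1 R r x ⊗ₜ[ℤ] (oneE : ↥(ModuleCat.of R R))) ⊗ₜ[ℤ] b), ?_⟩
    rw [TTmap_mk]
    show (Submodule.Quotient.mk ((odot1 R r x ⊗ₜ[ℤ] (Finsupp.single i (1 : R) : ι →₀ R))
        ⊗ₜ[ℤ] b) : TT R (ModuleCat.of R (ι →₀ R)) B)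
      = Submodule.Quotient.mk ((x ⊗ₜ[ℤ] (Finsupp.single i r : ι →₀ R)) ⊗ₜ[ℤ] b)
    refine (mk_odot1 (A := ModuleCat.of R (ι →₀ R)) (B := B) r x (Finsupp.single i (1 : R)) b).trans ?_
    rw [← single_eq_smul]

lemma TTmap_phi {A A' B B' : ModuleCat.{u} R} (f : A ⟶ A') (g : B ⟶ B') :
    (phiQ A' B').comp (TTmap f g) = (f ⊗ₘ g).hom.comp (phiQ A B) :=
  TT_hom_ext (fun x a b => phi_nat f g ((x ⊗ₜ[ℤ] a) ⊗ₜ[ℤ] b))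

/-- The braiding exhibits `tensorRight B` as isomorphic to `tensorLeft B`. -/
noncomputable def brNatIso (B : ModuleCat.{u} R) :
    tensorLeft B ≅ tensorRight B :=
  NatIso.ofComponents (fun X => β_ B X)
    (fun {X Y} f => BraidedCategory.braiding_naturality_right B f)

lemma phi_bij (A B : ModuleCat.{u} R) : Function.Bijective (phiQ A B) := by
  haveI i1 : PreservesColimitsOfSize.{u, u} (tensorLeft (ModuleCat.of R R)) :=
    (ihom.adjunction (ModuleCat.of R R)).leftAdjoint_preservesColimits
  haveI i2 : PreservesColimitsOfSize.{0, 0} (tensorLeft (ModuleCat.of R R)) :=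
    (ihom.adjunction (ModuleCat.of R R)).leftAdjoint_preservesColimits
  have step1 : ∀ B : ModuleCat.{u} R, Function.Bijective (phiQ (ModuleCat.of R R) B) := by
    intro B
    refine EW (tensorLeft (ModuleCat.of R R))
      (fun B => ModuleCat.of R (TT R (ModuleCat.of R R) B))
      (fun {B B'} g => ModuleCat.ofHom (TTmap (𝟙 _) g))
      (fun {B B' B''} g g' => ?_)
      (fun {B B'} => ModuleCat.hom_ext TTmap_zeroB)
      (fun {B B'} g hg => TTmap_surj _ _ (fun y => ⟨y, rfl⟩) hg)
      (fun ι t => span_B _ ι t)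
      (fun B => ModuleCat.ofHom (phiQ (ModuleCat.of R R) B))
      (fun {B B'} g => ?_)
      phiRR_bij B
    · have h := TTmap_comp (𝟙 (ModuleCat.of R R)) (𝟙 (ModuleCat.of R R)) g g'
      rw [Category.id_comp] at h
      exact ModuleCat.hom_ext h
    · have h := TTmap_phi (𝟙 (ModuleCat.of R R)) g
      rw [MonoidalCategory.id_tensorHom] at h
      exact ModuleCat.hom_ext h
  haveI i3 : PreservesColimitsOfSize.{u, u} (tensorLeft B) :=
    (ihom.adjunction B).leftAdjoint_preservesColimits
  haveI i4 : PreservesColimitsOfSize.{0, 0} (tensorLeft B) :=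
    (ihom.adjunction B).leftAdjoint_preservesColimits
  haveI i5 : PreservesColimitsOfSize.{u, u} (tensorRight B) :=
    preservesColimits_of_natIso (brNatIso B)
  haveI i6 : PreservesColimitsOfSize.{0, 0} (tensorRight B) :=
    preservesColimits_of_natIso (brNatIso B)
  refine EW (tensorRight B)
    (fun A => ModuleCat.of R (TT R A B))
    (fun {A A'} f => ModuleCat.ofHom (TTmap f (𝟙 B)))
    (fun {A A' A''} f f' => ?_)
    (fun {A A'} => ModuleCat.hom_ext TTmap_zeroA)
    (fun {A A'} f hf => TTmap_surj _ _ hf (fun y => ⟨y, rfl⟩))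
    (fun ι t => span_A _ ι t)
    (fun A => ModuleCat.ofHom (phiQ A B))
    (fun {A A'} f => ?_)
    (step1 B) A
  · have h := TTmap_comp f f' (𝟙 B) (𝟙 B)
    rw [Category.id_comp] at h
    exact ModuleCat.hom_ext h
  · have h := TTmap_phi f (𝟙 B)
    rw [MonoidalCategory.tensorHom_id] at h
    exact ModuleCat.hom_ext h

end Apps
/-- Given an additive closed symmetric monoidal structure `∧` on left `R`-modules, the two
actions `x ⊙₁ r := (ρ_r ∧ 𝟙)(x)` and `x ⊙₂ r := (𝟙 ∧ ρ_r)(x)` define right `R`-module structures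
on `Λ := R ∧ R` which commute with each other and with the left `R`-action, and there is an
isomorphism of left `R`-modules `((Λ,⊙₁) ⊗[R] A, ⊙₂) ⊗[R] B ≅ A ∧ B`, natural in `A` and `B`. -/
theorem wedge_eq_tensor_lambda :
    -- `⊙₁` is a right `R`-module structure
    (∀ x, odot1 R 1 x = x) ∧
    (∀ (r s : R) (x), odot1 R s (odot1 R r x) = odot1 R (r * s) x) ∧
    (∀ (r : R) (x y), odot1 R r (x + y) = odot1 R r x + odot1 R r y) ∧
    (∀ (r s : R) (x), odot1 R (r + s) x = odot1 R r x + odot1 R s x) ∧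
    -- `⊙₂` is a right `R`-module structure
    (∀ x, odot2 R 1 x = x) ∧
    (∀ (r s : R) (x), odot2 R s (odot2 R r x) = odot2 R (r * s) x) ∧
    (∀ (r : R) (x y), odot2 R r (x + y) = odot2 R r x + odot2 R r y) ∧
    (∀ (r s : R) (x), odot2 R (r + s) x = odot2 R r x + odot2 R s x) ∧
    -- the two right actions commute with each other
    (∀ (r s : R) (x), odot1 R r (odot2 R s x) = odot2 R s (odot1 R r x)) ∧
    -- the two right actions commute with the left `R`-action
    (∀ (c r : R) (x), odot1 R r (c • x) = c • odot1 R r x) ∧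
    (∀ (c r : R) (x), odot2 R r (c • x) = c • odot2 R r x) ∧
    -- the natural isomorphism `((Λ,⊙₁) ⊗[R] A, ⊙₂) ⊗[R] B ≅ A ∧ B`
    ∃ e : ∀ A B : ModuleCat.{u} R, TT R A B ≃ₗ[R] ↥(A ⊗ B),
      ∀ {A A' B B' : ModuleCat.{u} R} (f : A ⟶ A') (g : B ⟶ B')
        (z : (↥(Lambda R) ⊗[ℤ] ↥A) ⊗[ℤ] ↥B),
        e A' B' (Submodule.Quotient.mk
            (TensorProduct.map (TensorProduct.map LinearMap.id (toIntHom R f)) (toIntHom R g) z)) =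
          (f ⊗ₘ g) (e A B (Submodule.Quotient.mk z)) := by
  refine ⟨odot1_one, odot1_mul, odot1_add, odot1_addr,
    odot2_one, odot2_mul, odot2_add, odot2_addr,
    odot_comm, odot1_smul, odot2_smul, ?_⟩
  refine ⟨fun A B => LinearEquiv.ofBijective (phiQ A B) (phi_bij A B), ?_⟩
  intro A A' B B' f g z
  exact phi_nat f g z
end

section
/- Let R be a ring. If the category of left R-modules admits an additive closed symmetric monoidal structure whose unit object K is isomorphic to R as a left R-module, then R is commutative. -/
open CategoryTheory MonoidalCategory

universe u

/-- An additive closed symmetric monoidal structure on the category of left `R`-modules: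
a monoidal structure which is symmetric, closed, and additive (preadditive) in each variable. -/
structure AddClosedSymmMonStruct (R : Type u) [Ring R] : Type (u + 1) where
  mon : MonoidalCategory (ModuleCat.{u} R)
  symm : @SymmetricCategory (ModuleCat.{u} R) _ mon
  closed : @MonoidalClosed (ModuleCat.{u} R) _ mon
  preadd : @MonoidalPreadditive (ModuleCat.{u} R) _ _ mon

/-- The unit object of the structure. -/
def AddClosedSymmMonStruct.unit {R : Type u} [Ring R] (s : AddClosedSymmMonStruct R) :
    ModuleCat.{u} R :=
  letI := s.mon; 𝟙_ (ModuleCat.{u} R)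

/-- The monoidal product (the "wedge") of the structure. -/
def AddClosedSymmMonStruct.wedge {R : Type u} [Ring R] (s : AddClosedSymmMonStruct R)
    (A B : ModuleCat.{u} R) : ModuleCat.{u} R :=
  letI := s.mon; A ⊗ B

/-- Endomorphisms of the unit object in a monoidal category commute. -/
lemma end_unit_comm {C : Type*} [Category C] [MonoidalCategory C]
    (f g : 𝟙_ C ⟶ 𝟙_ C) : f ≫ g = g ≫ f := by
  have h1 : f ⊗ₘ g = (λ_ _).hom ≫ (f ≫ g) ≫ (λ_ _).inv := by
    rw [MonoidalCategory.tensorHom_def]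
    have hr : f ▷ 𝟙_ C = (ρ_ _).hom ≫ f ≫ (ρ_ _).inv := by simp
    have hl : 𝟙_ C ◁ g = (λ_ _).hom ≫ g ≫ (λ_ _).inv := by simp
    rw [hr, hl, Iso.ext unitors_equal]
    simp
  have h2 : f ⊗ₘ g = (λ_ _).hom ≫ (g ≫ f) ≫ (λ_ _).inv := by
    rw [MonoidalCategory.tensorHom_def']
    have hr : f ▷ 𝟙_ C = (ρ_ _).hom ≫ f ≫ (ρ_ _).inv := by simp
    have hl : 𝟙_ C ◁ g = (λ_ _).hom ≫ g ≫ (λ_ _).inv := by simp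
    rw [hr, hl, Iso.ext unitors_equal]
    simp
  have := h1.symm.trans h2
  simpa using congrArg (fun t => (λ_ (𝟙_ C)).inv ≫ t ≫ (λ_ (𝟙_ C)).hom) this

/-- If the category of left `R`-modules admits an additive closed symmetric monoidal structure
whose unit object is isomorphic to `R` as a left `R`-module, then `R` is commutative. -/
theorem commutative_of_unit_iso_self (R : Type u) [Ring R] (s : AddClosedSymmMonStruct R)
    (e : Nonempty (↥(s.unit) ≃ₗ[R] R)) : ∀ a b : R, a * b = b * a := by
  letI := s.mon
  obtain ⟨e⟩ := e
  intro a b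
  -- right multiplication by `a`, transported to the unit object
  let φ : R → (s.unit ⟶ s.unit) := fun a =>
    ModuleCat.ofHom ((e.symm.toLinearMap.comp (LinearMap.toSpanSingleton R R a)).comp e.toLinearMap)
  have key := end_unit_comm (C := ModuleCat.{u} R) (φ a) (φ b)
  set ψ : R → (↥(s.unit) →ₗ[R] ↥(s.unit)) := fun a =>
    (e.symm.toLinearMap.comp (LinearMap.toSpanSingleton R R a)).comp e.toLinearMap with hψ
  have key' : (ψ b).comp (ψ a) = (ψ a).comp (ψ b) := congrArg ModuleCat.Hom.hom key
  have h2 := LinearMap.congr_fun key' (e.symm 1)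
  simp only [hψ, LinearMap.comp_apply, LinearMap.toSpanSingleton_apply,
    LinearEquiv.coe_coe, LinearEquiv.apply_symm_apply, smul_eq_mul, one_mul] at h2
  have h3 := congrArg e h2
  simpa [mul_assoc] using h3
end

section
/- Let D be a division ring that is not commutative, let n ≥ 1, and let R = Matrix (Fin n) (Fin n) D be the ring of n × n matrices over D. Then there exists no additive closed symmetric monoidal structure on the category of left R-modules. -/
set_option linter.unusedSectionVars false

open CategoryTheory MonoidalCategory

universe u

open Matrix

section Aux

variable {D : Type} [DivisionRing D] {n : ℕ} [NeZero n]

/-- The matrix with entry `c` at `(i,j)` and `0` elsewhere. -/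
def eMat (i j : Fin n) (c : D) : Matrix (Fin n) (Fin n) D :=
  Matrix.of fun a b => if a = i ∧ b = j then c else 0

lemma mul_eMat (A : Matrix (Fin n) (Fin n) D) (i j : Fin n) (c : D) :
    A * eMat i j c = Matrix.of fun a b => if b = j then A a i * c else 0 := by
  ext a b
  simp only [Matrix.mul_apply, eMat, Matrix.of_apply]
  by_cases hb : b = j
  · simp [hb, Finset.sum_ite_eq', mul_ite, mul_zero]
  · simp [hb]

/-- The left ideal of matrices supported on column `j`. -/
def colSub (j : Fin n) :
    Submodule (Matrix (Fin n) (Fin n) D) (Matrix (Fin n) (Fin n) D) where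
  carrier := {A | ∀ a b, b ≠ j → A a b = 0}
  add_mem' := fun hA hB a b hb => by
    simp [Matrix.add_apply, hA a b hb, hB a b hb]
  zero_mem' := fun a b _ => rfl
  smul_mem' := fun M A hA => by
    intro a b hb
    show (M * A) a b = 0
    rw [Matrix.mul_apply]
    exact Finset.sum_eq_zero fun l _ => by rw [hA l b hb, mul_zero]

lemma mem_colSub {j : Fin n} {A : Matrix (Fin n) (Fin n) D} :
    A ∈ colSub j ↔ ∀ a b, b ≠ j → A a b = 0 := Iff.rfl

lemma eMat_mem_colSub {i j : Fin n} {c : D} : eMat i j c ∈ colSub j := by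
  intro a b hb
  simp [eMat, hb]

lemma colSub_simple (j : Fin n) :
    IsSimpleModule (Matrix (Fin n) (Fin n) D) (colSub (D := D) j) := by
  rw [isSimpleModule_iff_toSpanSingleton_surjective]
  constructor
  · refine ⟨⟨eMat 0 j 1, eMat_mem_colSub⟩, 0, fun hEq => ?_⟩
    have h0 : eMat (0 : Fin n) j (1 : D) = 0 := congrArg Subtype.val hEq
    have := congrFun (congrFun h0 0) j
    simp [eMat] at this
  · rintro ⟨A, hA⟩ hx0 ⟨B, hB⟩
    have hAne : A ≠ 0 := fun hh => hx0 (Subtype.ext hh)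
    obtain ⟨i, hi⟩ : ∃ i, A i j ≠ 0 := by
      by_contra hcon
      push_neg at hcon
      apply hAne
      ext a b
      by_cases hb : b = j
      · subst hb; simpa using hcon a
      · simpa using hA a b hb
    refine ⟨Matrix.of (fun a l => if l = i then B a j * (A i j)⁻¹ else 0), Subtype.ext ?_⟩
    show Matrix.of (fun a l => if l = i then B a j * (A i j)⁻¹ else 0) * A = B
    ext a b
    rw [Matrix.mul_apply]
    by_cases hb : b = j
    · subst hb
      rw [Finset.sum_eq_single i (fun l _ hl => by simp [hl]) (by simp)]
      simp [mul_assoc, inv_mul_cancel₀ hi]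
    · rw [Finset.sum_eq_zero fun l _ => by rw [hA l b hb, mul_zero]]
      exact (hB a b hb).symm

lemma iSup_colSub : (⨆ j, colSub (D := D) (n := n) j) = ⊤ := by
  rw [eq_top_iff]
  intro A _
  have hA : A = ∑ j, Matrix.of (fun a b => if b = j then A a b else 0) := by
    ext a b
    rw [Matrix.sum_apply]
    simp
  rw [hA]
  refine Submodule.sum_mem _ fun j _ => Submodule.mem_iSup_of_mem j ?_
  intro a b hb
  simp [hb]

lemma colSub_roundtrip {j k : Fin n} {A : Matrix (Fin n) (Fin n) D}
    (hA : A ∈ colSub k) : A * eMat k j 1 * eMat j k 1 = A := by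
  rw [mul_eMat, mul_eMat]
  ext a b
  by_cases hb : b = k
  · simp [hb]
  · simp [hb, hA a b hb]

/-- The column modules are pairwise isomorphic. -/
def colEquiv (j k : Fin n) :
    (colSub (D := D) (n := n) j) ≃ₗ[Matrix (Fin n) (Fin n) D] (colSub (D := D) (n := n) k) :=
  LinearEquiv.ofLinear
    { toFun := fun A => ⟨A.1 * eMat j k 1, by
        rw [mul_eMat]; intro a b hb; simp [hb]⟩
      map_add' := fun A B => Subtype.ext (by show (A.1 + B.1) * _ = _; rw [add_mul]; rfl)
      map_smul' := fun M A => Subtype.ext (by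
        show (M • A.1) * _ = M • (A.1 * _)
        rw [smul_eq_mul, smul_eq_mul, mul_assoc]) }
    { toFun := fun A => ⟨A.1 * eMat k j 1, by
        rw [mul_eMat]; intro a b hb; simp [hb]⟩
      map_add' := fun A B => Subtype.ext (by show (A.1 + B.1) * _ = _; rw [add_mul]; rfl)
      map_smul' := fun M A => Subtype.ext (by
        show (M • A.1) * _ = M • (A.1 * _)
        rw [smul_eq_mul, smul_eq_mul, mul_assoc]) }
    (LinearMap.ext fun A => Subtype.ext (colSub_roundtrip A.2))
    (LinearMap.ext fun A => Subtype.ext (colSub_roundtrip A.2))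

/-- Every simple module over the matrix ring is isomorphic to a column module. -/
lemma simple_iso_colSub (V : Type) [AddCommGroup V] [Module (Matrix (Fin n) (Fin n) D) V]
    [IsSimpleModule (Matrix (Fin n) (Fin n) D) V] :
    ∃ j, Nonempty ((colSub (D := D) (n := n) j) ≃ₗ[Matrix (Fin n) (Fin n) D] V) := by
  have : Nontrivial V := IsSimpleModule.nontrivial (Matrix (Fin n) (Fin n) D) V
  obtain ⟨x, hx⟩ := exists_ne (0 : V)
  set φ := LinearMap.toSpanSingleton (Matrix (Fin n) (Fin n) D) V x with hφ
  have hj : ∃ j, ¬ colSub (D := D) j ≤ LinearMap.ker φ := by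
    by_contra hcon
    push_neg at hcon
    have htop : (⊤ : Submodule (Matrix (Fin n) (Fin n) D) (Matrix (Fin n) (Fin n) D)) ≤
        LinearMap.ker φ := by
      rw [← iSup_colSub]
      exact iSup_le hcon
    have : φ 1 = 0 := htop trivial
    rw [hφ, LinearMap.toSpanSingleton_apply, one_smul] at this
    exact hx this
  obtain ⟨j, hj⟩ := hj
  haveI := colSub_simple (D := D) j
  set ψ := φ.comp (colSub (D := D) j).subtype with hψdef
  have hψ : ψ ≠ 0 := by
    intro h0
    apply hj
    intro A hA
    have := congrArg (fun (m : (colSub (D := D) j) →ₗ[Matrix (Fin n) (Fin n) D] V) =>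
      m ⟨A, hA⟩) h0
    simpa [hψdef, LinearMap.mem_ker] using this
  have hbij := ψ.bijective_or_eq_zero.resolve_right hψ
  exact ⟨j, ⟨LinearEquiv.ofBijective ψ hbij⟩⟩

/-- Any two simple modules over the matrix ring are isomorphic. -/
lemma simple_iso (V W : Type) [AddCommGroup V] [Module (Matrix (Fin n) (Fin n) D) V]
    [AddCommGroup W] [Module (Matrix (Fin n) (Fin n) D) W]
    [IsSimpleModule (Matrix (Fin n) (Fin n) D) V]
    [IsSimpleModule (Matrix (Fin n) (Fin n) D) W] :
    Nonempty (V ≃ₗ[Matrix (Fin n) (Fin n) D] W) := by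
  obtain ⟨j, ⟨e⟩⟩ := simple_iso_colSub (D := D) (n := n) V
  obtain ⟨k, ⟨f⟩⟩ := simple_iso_colSub (D := D) (n := n) W
  exact ⟨(e.symm.trans (colEquiv j k)).trans f⟩

end Aux

section Aux2

variable {D : Type} [DivisionRing D] {n : ℕ} [NeZero n]

lemma eMat_mul (i j : Fin n) (c c' : D) :
    eMat i j c * eMat j j c' = eMat (D := D) i j (c * c') := by
  rw [mul_eMat]
  ext a b
  by_cases hb : b = j <;> by_cases ha : a = i <;> simp [eMat, ha, hb]

/-- Right multiplication by `eMat j j c` as an endomorphism of the column module. -/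
def rmulE (j : Fin n) (c : D) :
    (colSub (D := D) (n := n) j) →ₗ[Matrix (Fin n) (Fin n) D] (colSub (D := D) (n := n) j) where
  toFun := fun A => ⟨A.1 * eMat j j c, by rw [mul_eMat]; intro a b hb; simp [hb]⟩
  map_add' := fun A B => Subtype.ext (by show (A.1 + B.1) * _ = _; rw [add_mul]; rfl)
  map_smul' := fun M A => Subtype.ext (by
    show (M • A.1) * _ = M • (A.1 * _)
    rw [smul_eq_mul, smul_eq_mul, mul_assoc])

lemma colSub_noncomm (j : Fin n) {a b : D} (hab : a * b ≠ b * a) :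
    ∃ f g : (colSub (D := D) (n := n) j) →ₗ[Matrix (Fin n) (Fin n) D]
      (colSub (D := D) (n := n) j), f ∘ₗ g ≠ g ∘ₗ f := by
  refine ⟨rmulE j a, rmulE j b, fun hEq => hab ?_⟩
  have happ := congrArg
    (fun (m : (colSub (D := D) j) →ₗ[Matrix (Fin n) (Fin n) D] (colSub (D := D) j)) =>
      (m ⟨eMat j j 1, eMat_mem_colSub⟩).1) hEq
  simp only [LinearMap.comp_apply, rmulE, LinearMap.coe_mk, AddHom.coe_mk] at happ
  rw [eMat_mul, eMat_mul, eMat_mul, eMat_mul, one_mul, one_mul] at happ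
  have := congrFun (congrFun happ j) j
  simpa [eMat] using this.symm

lemma conj_ne {V W : Type} [AddCommGroup V] [Module (Matrix (Fin n) (Fin n) D) V]
    [AddCommGroup W] [Module (Matrix (Fin n) (Fin n) D) W]
    (e : V ≃ₗ[Matrix (Fin n) (Fin n) D] W)
    {f g : V →ₗ[Matrix (Fin n) (Fin n) D] V} (hfg : f ∘ₗ g ≠ g ∘ₗ f) :
    ∃ f' g' : W →ₗ[Matrix (Fin n) (Fin n) D] W, f' ∘ₗ g' ≠ g' ∘ₗ f' := by
  refine ⟨e.toLinearMap ∘ₗ f ∘ₗ e.symm.toLinearMap,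
    e.toLinearMap ∘ₗ g ∘ₗ e.symm.toLinearMap, fun hEq => hfg ?_⟩
  ext v
  have := congrArg (fun (m : W →ₗ[Matrix (Fin n) (Fin n) D] W) => e.symm (m (e v))) hEq
  simpa using this

lemma matrix_noncomm_end {a b : D} (hab : a * b ≠ b * a) (K : Type) [AddCommGroup K]
    [Module (Matrix (Fin n) (Fin n) D) K] [Nontrivial K] :
    ∃ f g : K →ₗ[Matrix (Fin n) (Fin n) D] K, f ∘ₗ g ≠ g ∘ₗ f := by
  haveI hss : IsSemisimpleRing (Matrix (Fin n) (Fin n) D) := by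
    apply IsSemisimpleModule.of_sSup_simples_eq_top
    rw [eq_top_iff, ← iSup_colSub (D := D) (n := n)]
    exact iSup_le fun j => le_sSup (colSub_simple j)
  obtain ⟨S, hS⟩ := IsSemisimpleModule.exists_simple_submodule (Matrix (Fin n) (Fin n) D) K
  obtain ⟨T, hT⟩ := exists_isCompl S
  haveI := hS
  by_cases hTbot : T = ⊥
  · have hStop : S = ⊤ := by
      subst hTbot
      simpa using hT.sup_eq_top
    obtain ⟨j, ⟨e0⟩⟩ := simple_iso_colSub (D := D) (n := n) (↥S)
    obtain ⟨f, g, hfg⟩ := colSub_noncomm j hab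
    exact conj_ne (e0.trans ((LinearEquiv.ofEq _ _ hStop).trans Submodule.topEquiv)) hfg
  · obtain ⟨S', hS'le, hS'⟩ := (IsSemisimpleModule.eq_bot_or_exists_simple_le T).resolve_left hTbot
    haveI := hS'
    obtain ⟨u⟩ := simple_iso (D := D) (n := n) (↥S) (↥S')
    refine ⟨S.subtype ∘ₗ S.linearProjOfIsCompl T hT,
      S'.subtype ∘ₗ u.toLinearMap ∘ₗ S.linearProjOfIsCompl T hT, fun hEq => ?_⟩
    haveI : Nontrivial ↥S := IsSimpleModule.nontrivial (Matrix (Fin n) (Fin n) D) ↥S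
    obtain ⟨s0, hs0⟩ := exists_ne (0 : ↥S)
    have happ := congrArg (fun (m : K →ₗ[Matrix (Fin n) (Fin n) D] K) => m (s0 : K)) hEq
    simp only [LinearMap.comp_apply, Submodule.coe_subtype, LinearEquiv.coe_coe] at happ
    have h1 : S.linearProjOfIsCompl T hT (s0 : K) = s0 :=
      Submodule.linearProjOfIsCompl_apply_left hT s0
    have h2 : S.linearProjOfIsCompl T hT ((u s0 : ↥S') : K) = 0 :=
      Submodule.projectionOnto_apply_of_mem_right hT (hS'le (u s0).2)
    rw [h1, h2] at happ
    have hu0 : u s0 = 0 := by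
      apply Subtype.ext
      simpa [h1] using happ.symm
    exact hs0 (by simpa using (map_eq_zero_iff u u.injective).mp hu0)

end Aux2


/-- If `D` is a noncommutative division ring and `n ≥ 1`, then there is no additive closed
symmetric monoidal structure on the category of left modules over the matrix ring
`Matrix (Fin n) (Fin n) D`. -/
theorem no_structure_on_matrix_ring_of_noncommutative (D : Type) [DivisionRing D]
    (h : ¬ ∀ a b : D, a * b = b * a) (n : ℕ) (hn : 1 ≤ n) :
    IsEmpty (AddClosedSymmMonStruct (Matrix (Fin n) (Fin n) D)) := by
  push_neg at h
  obtain ⟨a, b, hab⟩ := h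
  haveI : NeZero n := ⟨by omega⟩
  refine ⟨fun s => ?_⟩
  letI := s.mon
  letI : MonoidalPreadditive (ModuleCat.{0} (Matrix (Fin n) (Fin n) D)) := s.preadd
  -- the unit object is a nontrivial module
  haveI hnt : Nontrivial ↥(𝟙_ (ModuleCat.{0} (Matrix (Fin n) (Fin n) D))) := by
    by_contra hcon
    rw [not_nontrivial_iff_subsingleton] at hcon
    have hid : 𝟙 (𝟙_ (ModuleCat.{0} (Matrix (Fin n) (Fin n) D))) = 0 :=
      ModuleCat.hom_ext (LinearMap.ext fun x => Subsingleton.elim _ _)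
    set X := ModuleCat.of (Matrix (Fin n) (Fin n) D) (Matrix (Fin n) (Fin n) D) with hX
    have h1 : 𝟙 (𝟙_ (ModuleCat.{0} (Matrix (Fin n) (Fin n) D)) ⊗ X) = 0 := by
      rw [← MonoidalCategory.id_whiskerRight, hid, MonoidalPreadditive.zero_whiskerRight]
    have h2 : 𝟙 X = 0 := by
      calc 𝟙 X = (λ_ X).inv ≫ 𝟙 (𝟙_ (ModuleCat.{0} (Matrix (Fin n) (Fin n) D)) ⊗ X) ≫
            (λ_ X).hom := by simp
        _ = (λ_ X).inv ≫ (0 : _ ⟶ _) ≫ (λ_ X).hom := by rw [h1]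
        _ = 0 := by simp
    have h3 := LinearMap.ext_iff.mp (congrArg ModuleCat.Hom.hom h2) (show ↥X from (1 : Matrix (Fin n) (Fin n) D))
    exact one_ne_zero (show (1 : Matrix (Fin n) (Fin n) D) = 0 from h3)
  -- Eckmann–Hilton: endomorphisms of the unit object commute
  have comm : ∀ f g : (𝟙_ (ModuleCat.{0} (Matrix (Fin n) (Fin n) D))) ⟶
      𝟙_ (ModuleCat.{0} (Matrix (Fin n) (Fin n) D)), f ≫ g = g ≫ f := by
    intro f g
    have hf : f = (λ_ (𝟙_ _)).inv ≫ (𝟙_ _ ◁ f) ≫ (λ_ (𝟙_ _)).hom := by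
      rw [MonoidalCategory.leftUnitor_naturality, Iso.inv_hom_id_assoc]
    have hg : g = (λ_ (𝟙_ _)).inv ≫ (g ▷ 𝟙_ _) ≫ (λ_ (𝟙_ _)).hom := by
      rw [unitors_equal, unitors_inv_equal, MonoidalCategory.rightUnitor_naturality,
        Iso.inv_hom_id_assoc]
    calc f ≫ g = ((λ_ (𝟙_ _)).inv ≫ (𝟙_ _ ◁ f) ≫ (λ_ (𝟙_ _)).hom) ≫
          ((λ_ (𝟙_ _)).inv ≫ (g ▷ 𝟙_ _) ≫ (λ_ (𝟙_ _)).hom) := by rw [← hf, ← hg]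
      _ = (λ_ (𝟙_ _)).inv ≫ ((𝟙_ _ ◁ f) ≫ (g ▷ 𝟙_ _)) ≫ (λ_ (𝟙_ _)).hom := by
          simp only [Category.assoc, Iso.hom_inv_id_assoc]
      _ = (λ_ (𝟙_ _)).inv ≫ ((g ▷ 𝟙_ _) ≫ (𝟙_ _ ◁ f)) ≫ (λ_ (𝟙_ _)).hom := by
          rw [MonoidalCategory.whisker_exchange]
      _ = ((λ_ (𝟙_ _)).inv ≫ (g ▷ 𝟙_ _) ≫ (λ_ (𝟙_ _)).hom) ≫
          ((λ_ (𝟙_ _)).inv ≫ (𝟙_ _ ◁ f) ≫ (λ_ (𝟙_ _)).hom) := by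
          simp only [Category.assoc, Iso.hom_inv_id_assoc]
      _ = g ≫ f := by rw [← hf, ← hg]
  obtain ⟨f, g, hfg⟩ :=
    matrix_noncomm_end (D := D) (n := n) hab (↥(𝟙_ (ModuleCat.{0} (Matrix (Fin n) (Fin n) D))))
  apply hfg
  have hc := comm (ModuleCat.ofHom g) (ModuleCat.ofHom f)
  exact congrArg ModuleCat.Hom.hom hc
end

section
/- Let k be a field of characteristic 2 and R = k[X]/(X²), with x the image of X. (i) For every k-bialgebra structure on R (with its given k-algebra structure), the counit satisfies ε(x) = 0 and there exists a ∈ k such that the comultiplication satisfies Δ(x) = 1 ⊗ x + x ⊗ 1 + a·(x ⊗ x); every such a does define a k-bialgebra structure, which is cocommutative. (ii) The bialgebra structures corresponding to parameters a and b are isomorphic as k-bialgebras if and only if (a = 0 ↔ b = 0); consequently there are exactly two isomorphism classes of k-Hopf algebra structures on R, represented by a = 0 and a = 1. -/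
open scoped TensorProduct

universe u

/-- A `k`-bialgebra structure on a `k`-algebra `A`: `k`-algebra maps
`Δ : A →ₐ[k] A ⊗[k] A` and `ε : A →ₐ[k] k` satisfying coassociativity and counitality. -/
structure BialgebraData (k : Type u) [CommSemiring k] (A : Type u) [Semiring A]
    [Algebra k A] where
  comul : A →ₐ[k] A ⊗[k] A
  counit : A →ₐ[k] k
  coassoc : ∀ y : A,
    TensorProduct.assoc k A A A
        (TensorProduct.map comul.toLinearMap LinearMap.id (comul y)) =
      TensorProduct.map LinearMap.id comul.toLinearMap (comul y)
  counit_left : ∀ y : A,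
    TensorProduct.lid k A (TensorProduct.map counit.toLinearMap LinearMap.id (comul y)) = y
  counit_right : ∀ y : A,
    TensorProduct.rid k A (TensorProduct.map LinearMap.id counit.toLinearMap (comul y)) = y

/-- Two bialgebra structures on `A` are isomorphic if there is a `k`-algebra automorphism
of `A` compatible with the counits and comultiplications. -/
def BialgebraData.Isomorphic {k : Type u} [CommSemiring k] {A : Type u} [Semiring A]
    [Algebra k A] (Ba Bb : BialgebraData k A) : Prop :=
  ∃ φ : A ≃ₐ[k] A,
    (∀ y : A, Bb.counit (φ y) = Ba.counit y) ∧
    (∀ y : A, Bb.comul (φ y) = TensorProduct.map φ.toLinearMap φ.toLinearMap (Ba.comul y))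

/-- The ring `k[X]/(X²)`. -/
abbrev DualNumbersQuot (k : Type) [Field k] : Type :=
  Polynomial k ⧸ Ideal.span {(Polynomial.X : Polynomial k) ^ 2}

/-- The image `x` of `X` in `k[X]/(X²)`. -/
noncomputable abbrev DualNumbersQuot.x (k : Type) [Field k] : DualNumbersQuot k :=
  Ideal.Quotient.mk _ Polynomial.X

set_option synthInstance.maxHeartbeats 1000000
set_option maxHeartbeats 4000000

namespace DN
open Polynomial
variable (k : Type) [Field k]

local notation "R" => DualNumbersQuot k
local notation "xx" => DualNumbersQuot.x k

lemma hx2 : xx * xx = 0 := by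
  have : xx ^ 2 = 0 := by
    rw [show xx ^ 2 = Ideal.Quotient.mk _ (X ^ 2 : Polynomial k) by simp [map_pow]]
    exact Ideal.Quotient.eq_zero_iff_mem.2 (Ideal.subset_span rfl)
  rwa [sq] at this

noncomputable def pb : PowerBasis k (DualNumbersQuot k) :=
  AdjoinRoot.powerBasis (by exact pow_ne_zero 2 X_ne_zero)

lemma pb_dim : (pb k).dim = 2 := by
  simp [pb, AdjoinRoot.powerBasis]

noncomputable def b : Module.Basis (Fin 2) k R :=
  (pb k).basis.reindex (finCongr (pb_dim k))

lemma b_apply (i : Fin 2) : b k i = xx ^ (i : ℕ) := by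
  rw [b, Module.Basis.reindex_apply, PowerBasis.coe_basis]
  rfl

lemma b0 : b k 0 = 1 := by rw [b_apply]; simp
lemma b1 : b k 1 = xx := by rw [b_apply]; simp

lemma x_ne_zero : xx ≠ 0 := by
  rw [← b1]
  exact (b k).ne_zero 1

lemma span2 (y : R) : ∃ c0 c1 : k, y = c0 • 1 + c1 • xx := by
  refine ⟨(b k).repr y 0, (b k).repr y 1, ?_⟩
  conv_lhs => rw [← (b k).sum_repr y]
  rw [Fin.sum_univ_two, b0, b1]

lemma inj2 {c0 c1 d0 d1 : k} (h : c0 • (1:R) + c1 • xx = d0 • 1 + d1 • xx) :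
    c0 = d0 ∧ c1 = d1 := by
  rw [← b0, ← b1] at h
  have h0 := congrArg (fun z => (b k).repr z 0) h
  have h1 := congrArg (fun z => (b k).repr z 1) h
  simp only [map_add, map_smul, Module.Basis.repr_self, Finsupp.add_apply, Finsupp.smul_apply,
    Finsupp.single_apply] at h0 h1
  norm_num at h0 h1
  exact ⟨h0, h1⟩

noncomputable def T : Module.Basis (Fin 2 × Fin 2) k (R ⊗[k] R) :=
  (b k).tensorProduct (b k)

lemma T_apply (i j : Fin 2) : T k (i, j) = b k i ⊗ₜ[k] b k j :=
  Module.Basis.tensorProduct_apply _ _ _ _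

lemma tspan (t : R ⊗[k] R) : ∃ c00 c01 c10 c11 : k,
    t = c00 • ((1:R) ⊗ₜ[k] (1:R)) + c01 • ((1:R) ⊗ₜ[k] xx) + c10 • (xx ⊗ₜ[k] (1:R))
      + c11 • (xx ⊗ₜ[k] xx) := by
  refine ⟨(T k).repr t (0,0), (T k).repr t (0,1), (T k).repr t (1,0), (T k).repr t (1,1), ?_⟩
  conv_lhs => rw [← (T k).sum_repr t]
  rw [Fintype.sum_prod_type]
  simp only [Fin.sum_univ_two, T_apply, b0, b1]
  abel

lemma tinj {c00 c01 c10 c11 d00 d01 d10 d11 : k}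
    (h : c00 • ((1:R) ⊗ₜ[k] (1:R)) + c01 • ((1:R) ⊗ₜ[k] xx) + c10 • (xx ⊗ₜ[k] (1:R))
      + c11 • (xx ⊗ₜ[k] xx)
      = d00 • ((1:R) ⊗ₜ[k] (1:R)) + d01 • ((1:R) ⊗ₜ[k] xx) + d10 • (xx ⊗ₜ[k] (1:R))
      + d11 • (xx ⊗ₜ[k] xx)) :
    c00 = d00 ∧ c01 = d01 ∧ c10 = d10 ∧ c11 = d11 := by
  rw [show (1:R) ⊗ₜ[k] (1:R) = T k (0,0) by rw [T_apply, b0],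
      show (1:R) ⊗ₜ[k] xx = T k (0,1) by rw [T_apply, b0, b1],
      show xx ⊗ₜ[k] (1:R) = T k (1,0) by rw [T_apply, b0, b1],
      show xx ⊗ₜ[k] xx = T k (1,1) by rw [T_apply, b1]] at h
  have h00 := congrArg (fun z => (T k).repr z (0,0)) h
  have h01 := congrArg (fun z => (T k).repr z (0,1)) h
  have h10 := congrArg (fun z => (T k).repr z (1,0)) h
  have h11 := congrArg (fun z => (T k).repr z (1,1)) h
  simp only [map_add, map_smul, Module.Basis.repr_self, Finsupp.add_apply, Finsupp.smul_apply,
    Finsupp.single_apply] at h00 h01 h10 h11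
  simp only [Prod.ext_iff, Fin.zero_eta, Fin.mk_one, show ((0:Fin 2) = 1) = False by simp,
    show ((1:Fin 2) = 0) = False by simp] at h00 h01 h10 h11
  norm_num at h00 h01 h10 h11
  exact ⟨h00, h01, h10, h11⟩

noncomputable def mkA {S : Type} [CommRing S] [Algebra k S] (s : S) (hs : s * s = 0) :
    R →ₐ[k] S :=
  AdjoinRoot.liftAlgHom _ (Algebra.ofId k S) s (by rw [eval₂_pow, eval₂_X, sq, hs])

lemma mkA_x {S : Type} [CommRing S] [Algebra k S] (s : S) (hs : s * s = 0) :
    mkA k s hs xx = s := by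
  unfold mkA
  rw [show xx = AdjoinRoot.root (X ^ 2 : Polynomial k) from rfl]
  exact AdjoinRoot.liftAlgHom_root (X ^ 2 : Polynomial k) (Algebra.ofId k S) s _

lemma hom_ext {S : Type} [CommRing S] [Algebra k S] {g₁ g₂ : R →ₐ[k] S}
    (h : g₁ xx = g₂ xx) : g₁ = g₂ :=
  AdjoinRoot.algHom_ext (f := (X ^ 2 : Polynomial k)) h

-- multiplication facts in R ⊗ R
lemma mul_uu : ((1:R) ⊗ₜ[k] xx) * ((1:R) ⊗ₜ[k] xx) = 0 := by
  rw [Algebra.TensorProduct.tmul_mul_tmul, hx2, one_mul, TensorProduct.tmul_zero]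
lemma mul_vv : ((xx ⊗ₜ[k] (1:R))) * (xx ⊗ₜ[k] (1:R)) = 0 := by
  rw [Algebra.TensorProduct.tmul_mul_tmul, hx2, one_mul, TensorProduct.zero_tmul]
lemma mul_uv : ((1:R) ⊗ₜ[k] xx) * (xx ⊗ₜ[k] (1:R)) = xx ⊗ₜ[k] xx := by
  rw [Algebra.TensorProduct.tmul_mul_tmul, one_mul, mul_one]
lemma mul_vu : (xx ⊗ₜ[k] (1:R)) * ((1:R) ⊗ₜ[k] xx) = xx ⊗ₜ[k] xx := by
  rw [Algebra.TensorProduct.tmul_mul_tmul, one_mul, mul_one]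
lemma mul_um : ((1:R) ⊗ₜ[k] xx) * (xx ⊗ₜ[k] xx) = 0 := by
  rw [Algebra.TensorProduct.tmul_mul_tmul, hx2, TensorProduct.tmul_zero]
lemma mul_mu : (xx ⊗ₜ[k] xx) * ((1:R) ⊗ₜ[k] xx) = 0 := by
  rw [Algebra.TensorProduct.tmul_mul_tmul, hx2, TensorProduct.tmul_zero]
lemma mul_vm : (xx ⊗ₜ[k] (1:R)) * (xx ⊗ₜ[k] xx) = 0 := by
  rw [Algebra.TensorProduct.tmul_mul_tmul, hx2, TensorProduct.zero_tmul]
lemma mul_mv : (xx ⊗ₜ[k] xx) * (xx ⊗ₜ[k] (1:R)) = 0 := by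
  rw [Algebra.TensorProduct.tmul_mul_tmul, hx2, TensorProduct.zero_tmul]
lemma mul_mm : (xx ⊗ₜ[k] xx) * (xx ⊗ₜ[k] xx) = 0 := by
  rw [Algebra.TensorProduct.tmul_mul_tmul, hx2, TensorProduct.zero_tmul]

noncomputable def w (a : k) : R ⊗[k] R :=
  (1:R) ⊗ₜ[k] xx + xx ⊗ₜ[k] (1:R) + a • (xx ⊗ₜ[k] xx)

noncomputable abbrev semRR : Semiring (R ⊗[k] R) := inferInstance
noncomputable abbrev algRR : Algebra k (R ⊗[k] R) := inferInstance
attribute [local instance] semRR algRR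

lemma hsmul : ∀ (c : k) (t : R ⊗[k] R), c • t = algebraMap k (R ⊗[k] R) c * t :=
  fun c t => Algebra.smul_def c t

lemma hsmulR : ∀ (c : k) (t : R), c • t = algebraMap k R c * t :=
  fun c t => Algebra.smul_def c t

lemma w_sq (h2 : (2:k) = 0) (a : k) : w k a * w k a = 0 := by
  have h2R : (2 : R ⊗[k] R) = 0 := by
    rw [← map_ofNat (algebraMap k (R ⊗[k] R)) 2, h2, map_zero]
  rw [w, hsmul]
  set u := (1:R) ⊗ₜ[k] xx with hu
  set v := xx ⊗ₜ[k] (1:R) with hv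
  set m := xx ⊗ₜ[k] xx with hm
  set A := algebraMap k (R ⊗[k] R) a with hA
  have key : (u + v + A * m) * (u + v + A * m)
      = u*u + v*v + A*A*(m*m) + (u*v + v*u) + A*(u*m + m*u) + A*(v*m + m*v) := by ring
  rw [key, mul_uu k, mul_vv k, mul_uv k, mul_vu k, mul_um k, mul_mu k, mul_vm k, mul_mv k,
    mul_mm k, show m + m = 2 * m by ring, h2R]
  ring

noncomputable def eps : R →ₐ[k] k := mkA k 0 (by rw [mul_zero])

lemma eps_x : eps k xx = 0 := mkA_x k 0 (by rw [mul_zero])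

noncomputable def Delta (h2 : (2:k) = 0) (a : k) : R →ₐ[k] R ⊗[k] R :=
  mkA k (w k a) (w_sq k h2 a)

lemma Delta_x (h2 : (2:k) = 0) (a : k) : Delta k h2 a xx = w k a :=
  mkA_x k (w k a) (w_sq k h2 a)

lemma Delta_one (h2 : (2:k) = 0) (a : k) : Delta k h2 a 1 = (1:R) ⊗ₜ[k] (1:R) := by
  rw [map_one, Algebra.TensorProduct.one_def]

noncomputable def stdB (h2 : (2:k) = 0) (a : k) : BialgebraData k R where
  comul := Delta k h2 a
  counit := eps k
  coassoc := by
    intro y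
    obtain ⟨c0, c1, rfl⟩ := span2 k y
    simp only [map_add, map_smul, Delta_one, Delta_x, w, TensorProduct.map_tmul,
      TensorProduct.assoc_tmul, LinearMap.id_coe, id_eq, AlgHom.toLinearMap_apply,
      TensorProduct.tmul_add, TensorProduct.add_tmul, TensorProduct.smul_tmul',
      TensorProduct.tmul_smul, smul_add, map_one, Algebra.TensorProduct.one_def, map_zero,
      smul_eq_mul, mul_one, one_smul]
    simp only [TensorProduct.smul_tmul, TensorProduct.tmul_smul]
    module
  counit_left := by
    intro y
    obtain ⟨c0, c1, rfl⟩ := span2 k y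
    simp only [map_add, map_smul, Delta_one, Delta_x, w, TensorProduct.map_tmul,
      TensorProduct.lid_tmul, LinearMap.id_coe, id_eq, AlgHom.toLinearMap_apply,
      TensorProduct.tmul_add, TensorProduct.add_tmul, TensorProduct.smul_tmul',
      TensorProduct.tmul_smul, smul_add, map_one, eps_x, TensorProduct.zero_tmul,
      TensorProduct.tmul_zero, smul_zero, zero_smul, add_zero, one_smul,
      Algebra.TensorProduct.one_def, map_zero, smul_eq_mul, mul_one]
    module
  counit_right := by
    intro y
    obtain ⟨c0, c1, rfl⟩ := span2 k y
    simp only [map_add, map_smul, Delta_one, Delta_x, w, TensorProduct.map_tmul,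
      TensorProduct.rid_tmul, LinearMap.id_coe, id_eq, AlgHom.toLinearMap_apply,
      TensorProduct.tmul_add, TensorProduct.add_tmul, TensorProduct.smul_tmul',
      TensorProduct.tmul_smul, smul_add, map_one, eps_x, TensorProduct.zero_tmul,
      TensorProduct.tmul_zero, smul_zero, zero_smul, add_zero, one_smul,
      Algebra.TensorProduct.one_def, map_zero, smul_eq_mul, mul_one]
    module

lemma stdB_cocomm (h2 : (2:k) = 0) (a : k) (y : R) :
    TensorProduct.comm k R R ((stdB k h2 a).comul y) = (stdB k h2 a).comul y := by
  obtain ⟨c0, c1, rfl⟩ := span2 k y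
  simp only [stdB, map_add, map_smul, Delta_one, Delta_x, w, TensorProduct.comm_tmul,
    TensorProduct.tmul_smul, TensorProduct.smul_tmul', Algebra.TensorProduct.one_def,
    map_zero, smul_eq_mul, mul_one, one_smul, smul_add]
  module

lemma counit_x (B : BialgebraData k R) : B.counit xx = 0 := by
  have h : B.counit xx * B.counit xx = 0 := by
    rw [← map_mul, hx2, map_zero]
  exact mul_self_eq_zero.mp h

lemma comul_x (B : BialgebraData k R) : ∃ a : k, B.comul xx = w k a := by
  obtain ⟨c00, c01, c10, c11, ht⟩ := tspan k (B.comul xx)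
  have hl := B.counit_left xx
  have hr := B.counit_right xx
  rw [ht] at hl hr
  simp only [map_add, map_smul, TensorProduct.map_tmul, TensorProduct.lid_tmul,
    TensorProduct.rid_tmul, LinearMap.id_coe, id_eq, AlgHom.toLinearMap_apply,
    map_one, counit_x k B, zero_smul, smul_zero, add_zero, one_smul, smul_smul] at hl hr
  have hl' : c00 • (1:R) + c01 • xx = (0:k) • 1 + (1:k) • xx := by
    rw [zero_smul, one_smul, zero_add]; exact hl
  have hr' : c00 • (1:R) + c10 • xx = (0:k) • 1 + (1:k) • xx := by
    rw [zero_smul, one_smul, zero_add]; exact hr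
  obtain ⟨e00, e01⟩ := inj2 k hl'
  obtain ⟨_, e10⟩ := inj2 k hr'
  refine ⟨c11, ?_⟩
  rw [ht, e00, e01, e10, w, zero_smul, one_smul, one_smul, zero_add]

lemma csq (c : k) : (c • xx) * (c • xx) = 0 := by
  rw [hsmulR k c]
  rw [show (algebraMap k R c * xx) * (algebraMap k R c * xx)
      = (algebraMap k R c * algebraMap k R c) * (xx * xx) by ring, hx2, mul_zero]

noncomputable def psi (c : k) : R →ₐ[k] R := mkA k (c • xx) (csq k c)

lemma psi_x (c : k) : psi k c xx = c • xx := mkA_x k _ _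

noncomputable def phi (c : k) (hc : c ≠ 0) : R ≃ₐ[k] R :=
  AlgEquiv.ofAlgHom (psi k c) (psi k c⁻¹)
    (hom_ext k (by
      simp only [AlgHom.coe_comp, Function.comp_apply, psi_x, map_smul, smul_smul,
        inv_mul_cancel₀ hc, mul_inv_cancel₀ hc, one_smul, AlgHom.coe_id, id_eq]))
    (hom_ext k (by
      simp only [AlgHom.coe_comp, Function.comp_apply, psi_x, map_smul, smul_smul,
        inv_mul_cancel₀ hc, mul_inv_cancel₀ hc, one_smul, AlgHom.coe_id, id_eq]))

lemma phi_apply (c : k) (hc : c ≠ 0) (y : R) : phi k c hc y = psi k c y := rfl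

lemma iso_of {a b c : k} (hc : c ≠ 0) (hb : b = a * c)
    (Ba Bb : BialgebraData k R) (hBa : Ba.comul xx = w k a) (hBb : Bb.comul xx = w k b) :
    Ba.Isomorphic Bb := by
  subst hb
  refine ⟨phi k c hc, ?_, ?_⟩
  · intro y
    obtain ⟨c0, c1, rfl⟩ := span2 k y
    simp only [map_add, map_smul, phi_apply, psi_x, map_one, counit_x k Ba, counit_x k Bb,
      smul_zero, add_zero, smul_smul]
  · intro y
    obtain ⟨c0, c1, rfl⟩ := span2 k y
    simp only [map_add, map_smul, phi_apply, psi_x, map_one, hBa, hBb, w,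
      TensorProduct.map_tmul, AlgEquiv.toLinearMap_apply, Algebra.TensorProduct.one_def,
      TensorProduct.tmul_smul, smul_add, smul_smul]
    try simp only [TensorProduct.smul_tmul, TensorProduct.tmul_smul]
    module

lemma iso_param (h2 : (2:k) = 0) {a b : k} (Ba Bb : BialgebraData k R)
    (hBa : Ba.comul xx = w k a) (hBb : Bb.comul xx = w k b) (h : Ba.Isomorphic Bb) :
    ∃ c : k, c ≠ 0 ∧ b = a * c := by
  obtain ⟨φ, hcounit, hcomul⟩ := h
  obtain ⟨c0, c1, hφx⟩ := span2 k (φ xx)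
  have hsq : φ xx * φ xx = 0 := by rw [← map_mul, hx2, map_zero]
  rw [hφx] at hsq
  have hexp : (c0 • (1:R) + c1 • xx) * (c0 • (1:R) + c1 • xx) = (c0*c0) • (1:R) := by
    rw [hsmulR k c0, hsmulR k c1, hsmulR k (c0*c0), map_mul]
    rw [show ∀ A B : R, (A*1 + B*xx)*(A*1 + B*xx)
        = (A*A)*1 + (A*B)*(((1:R)+1)*xx) + B*B*(xx*xx) from fun A B => by ring, hx2,
      mul_zero, add_zero]
    have h2R : ((1:R)+1) = 0 := by
      rw [one_add_one_eq_two, ← map_ofNat (algebraMap k R) 2, h2, map_zero]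
    rw [h2R, zero_mul, mul_zero, add_zero]
  rw [hexp] at hsq
  have hc0 : c0 = 0 := by
    have h' : (c0*c0) • (1:R) + (0:k) • xx = (0:k) • 1 + (0:k) • xx := by
      simp only [zero_smul, add_zero, zero_add]
      exact hsq
    exact mul_self_eq_zero.mp (inj2 k h').1
  rw [hc0, zero_smul, zero_add] at hφx
  have hc1 : c1 ≠ 0 := by
    intro h0
    rw [h0, zero_smul] at hφx
    exact x_ne_zero k (φ.injective (by rw [hφx, map_zero]))
  refine ⟨c1, hc1, ?_⟩
  have key : (0:k) • ((1:R) ⊗ₜ[k] (1:R)) + c1 • ((1:R) ⊗ₜ[k] xx) + c1 • (xx ⊗ₜ[k] (1:R))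
      + (c1*b) • (xx ⊗ₜ[k] xx)
      = (0:k) • ((1:R) ⊗ₜ[k] (1:R)) + c1 • ((1:R) ⊗ₜ[k] xx) + c1 • (xx ⊗ₜ[k] (1:R))
      + (a*(c1*c1)) • (xx ⊗ₜ[k] xx) := by
    calc (0:k) • ((1:R) ⊗ₜ[k] (1:R)) + c1 • ((1:R) ⊗ₜ[k] xx) + c1 • (xx ⊗ₜ[k] (1:R))
        + (c1*b) • (xx ⊗ₜ[k] xx) = c1 • w k b := by rw [w]; module
      _ = Bb.comul (φ xx) := by rw [hφx, map_smul, hBb]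
      _ = TensorProduct.map φ.toLinearMap φ.toLinearMap (Ba.comul xx) := hcomul xx
      _ = _ := by
          rw [hBa, w]
          simp only [map_add, map_smul, TensorProduct.map_tmul,
            AlgEquiv.toLinearMap_apply, map_one, hφx, TensorProduct.tmul_smul]
          try simp only [TensorProduct.smul_tmul, TensorProduct.tmul_smul]
          module
  obtain ⟨-, -, -, h11⟩ := tinj k key
  have h12 : c1 * b = c1 * (a * c1) := by rw [h11]; ring
  exact mul_left_cancel₀ hc1 h12

end DN

set_option synthInstance.maxHeartbeats 1000000 in
set_option maxHeartbeats 4000000 in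
/-- Over a field `k` of characteristic `2` and `R = k[X]/(X²)`:  every `k`-bialgebra structure on
`R` has `ε(x) = 0` and `Δ(x) = 1 ⊗ x + x ⊗ 1 + a • (x ⊗ x)` for some `a : k`; every `a : k`
arises from such a (cocommutative) bialgebra structure; two such structures with parameters `a`
and `b` are isomorphic iff `(a = 0 ↔ b = 0)`; and consequently there are exactly two isomorphism
classes, represented by `a = 0` and `a = 1`. -/
theorem bialgebra_structures_on_dualNumbers (k : Type) [Field k] (h2 : (2 : k) = 0) :
    (∀ B : BialgebraData k (DualNumbersQuot k),
        B.counit (DualNumbersQuot.x k) = 0 ∧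
        ∃ a : k, B.comul (DualNumbersQuot.x k) =
          (1 : DualNumbersQuot k) ⊗ₜ[k] DualNumbersQuot.x k +
            DualNumbersQuot.x k ⊗ₜ[k] (1 : DualNumbersQuot k) +
            a • (DualNumbersQuot.x k ⊗ₜ[k] DualNumbersQuot.x k)) ∧
    (∀ a : k, ∃ B : BialgebraData k (DualNumbersQuot k),
        B.comul (DualNumbersQuot.x k) =
          (1 : DualNumbersQuot k) ⊗ₜ[k] DualNumbersQuot.x k +
            DualNumbersQuot.x k ⊗ₜ[k] (1 : DualNumbersQuot k) +
            a • (DualNumbersQuot.x k ⊗ₜ[k] DualNumbersQuot.x k) ∧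
        ∀ y, TensorProduct.comm k (DualNumbersQuot k) (DualNumbersQuot k) (B.comul y) =
          B.comul y) ∧
    (∀ (a b : k) (Ba Bb : BialgebraData k (DualNumbersQuot k)),
        Ba.comul (DualNumbersQuot.x k) =
          (1 : DualNumbersQuot k) ⊗ₜ[k] DualNumbersQuot.x k +
            DualNumbersQuot.x k ⊗ₜ[k] (1 : DualNumbersQuot k) +
            a • (DualNumbersQuot.x k ⊗ₜ[k] DualNumbersQuot.x k) →
        Bb.comul (DualNumbersQuot.x k) =
          (1 : DualNumbersQuot k) ⊗ₜ[k] DualNumbersQuot.x k +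
            DualNumbersQuot.x k ⊗ₜ[k] (1 : DualNumbersQuot k) +
            b • (DualNumbersQuot.x k ⊗ₜ[k] DualNumbersQuot.x k) →
        (Ba.Isomorphic Bb ↔ (a = 0 ↔ b = 0))) ∧
    (∃ B0 B1 : BialgebraData k (DualNumbersQuot k),
        B0.comul (DualNumbersQuot.x k) =
          (1 : DualNumbersQuot k) ⊗ₜ[k] DualNumbersQuot.x k +
            DualNumbersQuot.x k ⊗ₜ[k] (1 : DualNumbersQuot k) ∧
        B1.comul (DualNumbersQuot.x k) =
          (1 : DualNumbersQuot k) ⊗ₜ[k] DualNumbersQuot.x k +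
            DualNumbersQuot.x k ⊗ₜ[k] (1 : DualNumbersQuot k) +
            DualNumbersQuot.x k ⊗ₜ[k] DualNumbersQuot.x k ∧
        ¬ B0.Isomorphic B1 ∧
        ∀ B : BialgebraData k (DualNumbersQuot k), B.Isomorphic B0 ∨ B.Isomorphic B1) := by
  have hstd : ∀ a : k, (DN.stdB k h2 a).comul (DualNumbersQuot.x k) = DN.w k a :=
    fun a => DN.Delta_x k h2 a
  refine ⟨?_, ?_, ?_, ?_⟩
  · intro B
    refine ⟨DN.counit_x k B, ?_⟩
    obtain ⟨a, ha⟩ := DN.comul_x k B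
    exact ⟨a, by rw [ha, DN.w]⟩
  · intro a
    refine ⟨DN.stdB k h2 a, ?_, DN.stdB_cocomm k h2 a⟩
    rw [hstd a, DN.w]
  · intro a b Ba Bb hBa hBb
    have hBa' : Ba.comul (DualNumbersQuot.x k) = DN.w k a := by rw [DN.w]; exact hBa
    have hBb' : Bb.comul (DualNumbersQuot.x k) = DN.w k b := by rw [DN.w]; exact hBb
    constructor
    · intro h
      obtain ⟨c, hc, hb⟩ := DN.iso_param k h2 Ba Bb hBa' hBb' h
      subst hb
      constructor
      · intro ha; rw [ha, zero_mul]
      · intro hac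
        rcases mul_eq_zero.mp hac with h' | h'
        · exact h'
        · exact absurd h' hc
    · intro hiff
      by_cases ha : a = 0
      · exact DN.iso_of k (c := 1) one_ne_zero (by rw [ha, hiff.mp ha, zero_mul]) Ba Bb hBa' hBb'
      · have hb : b ≠ 0 := fun h => ha (hiff.mpr h)
        exact DN.iso_of k (c := a⁻¹ * b) (mul_ne_zero (inv_ne_zero ha) hb)
          (by rw [← mul_assoc, mul_inv_cancel₀ ha, one_mul]) Ba Bb hBa' hBb'
  · refine ⟨DN.stdB k h2 0, DN.stdB k h2 1, ?_, ?_, ?_, ?_⟩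
    · rw [hstd 0, DN.w, zero_smul, add_zero]
    · rw [hstd 1, DN.w, one_smul]
    · intro h
      obtain ⟨c, hc, hb⟩ := DN.iso_param k h2 _ _ (hstd 0) (hstd 1) h
      rw [zero_mul] at hb
      exact one_ne_zero hb
    · intro B
      obtain ⟨a, ha⟩ := DN.comul_x k B
      by_cases h0 : a = 0
      · exact Or.inl (DN.iso_of k (c := 1) one_ne_zero (by rw [h0, zero_mul]) B _ ha (hstd 0))
      · exact Or.inr (DN.iso_of k (c := a⁻¹) (inv_ne_zero h0)
          (by rw [mul_inv_cancel₀ h0]) B _ ha (hstd 1))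
end

section
/- Let R be a ring with an additive closed symmetric monoidal structure ∧ on the category of left R-modules. Then the left R-module R ∧ R is faithful: if r ∈ R satisfies r • x = 0 for every element x of the R-module R ∧ R, then r = 0. -/
open CategoryTheory MonoidalCategory

universe u

/-- `R ∧ R` is a faithful `R`-module: if `r • x = 0` for all `x : R ∧ R`, then `r = 0`. -/
theorem wedge_self_faithful (R : Type u) [Ring R] (s : AddClosedSymmMonStruct R) (r : R)
    (h : ∀ x : ↥(s.wedge (ModuleCat.of R R) (ModuleCat.of R R)), r • x = 0) : r = 0 := by
  letI := s.mon
  letI := s.symm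
  letI := s.closed
  letI := s.preadd
  classical
  set RR : ModuleCat.{u} R := ModuleCat.of R R with hRR
  set K : ModuleCat.{u} R := 𝟙_ (ModuleCat.{u} R) with hK
  -- the tensor functor `RR ⊗ -` preserves colimits (it is a left adjoint)
  haveI h1 : Limits.PreservesColimitsOfSize.{u, u} (tensorLeft RR) :=
    (ihom.adjunction RR).leftAdjoint_preservesColimits
  haveI h0 : Limits.PreservesColimitsOfSize.{0, 0} (tensorLeft RR) :=
    (ihom.adjunction RR).leftAdjoint_preservesColimits
  -- a coproduct of copies of `RR` indexed by the elements of `K`, surjecting onto `K`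
  let f : K → ModuleCat.{u} R := fun _ => RR
  let φ : ∀ _ : K, RR ⟶ K := fun k => (ModuleCat.ofHom (LinearMap.toSpanSingleton R K k) : RR ⟶ K)
  let p : (∐ f) ⟶ K := Limits.Sigma.desc φ
  haveI hp : Epi p := by
    rw [ModuleCat.epi_iff_surjective]
    intro k
    refine ⟨Limits.Sigma.ι f k (1 : R), ?_⟩
    have h2 : Limits.Sigma.ι f k ≫ p = φ k := Limits.Sigma.ι_desc _ _
    have h3 := ConcreteCategory.congr_hom h2 (1 : R)
    have h4 : p ((Limits.Sigma.ι f k) (1 : R)) = (φ k) (1 : R) := h3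
    rw [h4]
    exact one_smul R k
  -- hence an epimorphism `RR ⊗ ∐ f ⟶ RR`
  let e : (tensorLeft RR).obj (∐ f) ⟶ RR := (tensorLeft RR).map p ≫ (ρ_ RR).hom
  haveI : Epi e := epi_comp _ _
  -- the coproduct of copies of `RR ⊗ RR`
  let g : K → ModuleCat.{u} R := fun k => (tensorLeft RR).obj (f k)
  -- every element of `∐ g` is killed by `r`
  have claim1 : ∀ y : ↥(∐ g), r • y = 0 := by
    have hr : ∀ (k : K) (w : ↥(g k)), r • w = 0 := fun k w => h w
    let N : Submodule R ↥(∐ g) :=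
      ⨆ k : K, LinearMap.range ((Limits.Sigma.ι g k : g k ⟶ ∐ g).hom : ↥(g k) →ₗ[R] ↥(∐ g))
    have hN : ∀ y : ↥(∐ g), y ∈ N := by
      intro y
      let q : (∐ g) ⟶ ModuleCat.of R (↥(∐ g) ⧸ N) := ModuleCat.ofHom N.mkQ
      have hq : q = 0 := by
        apply Limits.Sigma.hom_ext
        intro k
        ext w
        have hmem : (Limits.Sigma.ι g k : g k ⟶ ∐ g) w ∈ N :=
          Submodule.mem_iSup_of_mem k ⟨w, rfl⟩
        show N.mkQ ((Limits.Sigma.ι g k) w) = (0 : ↥(g k) →ₗ[R] (↥(∐ g) ⧸ N)) w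
        rw [LinearMap.zero_apply]
        exact (Submodule.Quotient.mk_eq_zero N).2 hmem
      have hy : N.mkQ y = 0 := ConcreteCategory.congr_hom hq y
      exact (Submodule.Quotient.mk_eq_zero N).1 hy
    intro y
    refine Submodule.iSup_induction (motive := fun z => r • z = 0) _ (hN y) ?_ (smul_zero r) ?_
    · rintro k z ⟨w, rfl⟩
      have : r • ((Limits.Sigma.ι g k : g k ⟶ ∐ g) w) =
          (Limits.Sigma.ι g k : g k ⟶ ∐ g) (r • w) := (map_smul _ _ _).symm
      rw [this, hr k w, map_zero]
    · intro a b ha hb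
      rw [smul_add, ha, hb, add_zero]
  -- transfer along the comparison isomorphism: every element of `RR ⊗ ∐ f` is killed by `r`
  have claim2 : ∀ z : ↥((tensorLeft RR).obj (∐ f)), r • z = 0 := by
    intro z
    let σ := Limits.sigmaComparison (tensorLeft RR) f
    haveI : IsIso σ := inferInstance
    haveI : Epi σ := inferInstance
    obtain ⟨y, rfl⟩ := (ModuleCat.epi_iff_surjective σ).mp inferInstance z
    rw [← map_smul, claim1, map_zero]
  -- conclude
  obtain ⟨x, hx⟩ := (ModuleCat.epi_iff_surjective e).mp inferInstance (1 : R)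
  have h5 : r • e x = 0 := by
    rw [← map_smul, claim2, map_zero]
  rw [hx] at h5
  have h6 : r * 1 = 0 := h5
  simpa using h6
end

section
/- Let R be a ring with an additive closed symmetric monoidal structure on the category of left R-modules, with unit object K. Then there is an injective ring homomorphism from the endomorphism ring End_R(K) of the R-module K into the center of R. In particular, End_R(K) is a commutative ring. -/
open CategoryTheory MonoidalCategory

universe u

section Aux

variable {C : Type*} [CategoryTheory.Category C] [MonoidalCategory C]

/-- The family `X ↦ (λ_X)⁻¹ ≫ f ▷ X ≫ λ_X` attached to an endomorphism `f` of the unit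
is a natural endomorphism of the identity functor. -/
theorem aux_whisker_nat (f : 𝟙_ C ⟶ 𝟙_ C) {X Y : C} (u : X ⟶ Y) :
    ((λ_ X).inv ≫ f ▷ X ≫ (λ_ X).hom) ≫ u = u ≫ ((λ_ Y).inv ≫ f ▷ Y ≫ (λ_ Y).hom) := by
  have h2 : (λ_ X).inv ≫ (𝟙_ C ◁ u) = u ≫ (λ_ Y).inv := by
    rw [Iso.inv_comp_eq, ← Category.assoc, ← MonoidalCategory.leftUnitor_naturality u,
      Category.assoc, Iso.hom_inv_id, Category.comp_id]
  calc ((λ_ X).inv ≫ f ▷ X ≫ (λ_ X).hom) ≫ u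
      = (λ_ X).inv ≫ f ▷ X ≫ (𝟙_ C ◁ u) ≫ (λ_ Y).hom := by
        rw [Category.assoc, Category.assoc, MonoidalCategory.leftUnitor_naturality u]
    _ = (λ_ X).inv ≫ (𝟙_ C ◁ u) ≫ f ▷ Y ≫ (λ_ Y).hom := by
        rw [← Category.assoc (f ▷ X), ← MonoidalCategory.whisker_exchange,
          Category.assoc]
    _ = u ≫ (λ_ Y).inv ≫ f ▷ Y ≫ (λ_ Y).hom := by
        rw [← Category.assoc, h2, Category.assoc]

/-- At the unit object, the above natural endomorphism recovers `f`. -/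
theorem aux_whisker_unit (f : 𝟙_ C ⟶ 𝟙_ C) :
    (λ_ (𝟙_ C)).inv ≫ f ▷ (𝟙_ C) ≫ (λ_ (𝟙_ C)).hom = f := by
  rw [unitors_equal, MonoidalCategory.rightUnitor_naturality f,
    ← unitors_equal, Iso.inv_hom_id_assoc]

end Aux

/-- If `K` is the unit of an additive closed symmetric monoidal structure on the category of
left `R`-modules, then the endomorphism ring `End_R(K)` embeds in the center of `R`;
in particular it is commutative. -/
theorem endRing_unit_embeds_in_center (R : Type u) [Ring R] (s : AddClosedSymmMonStruct R) :
    ∃ f : Module.End R ↥(s.unit) →+* Subring.center R, Function.Injective f ∧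
      ∀ g h : Module.End R ↥(s.unit), g * h = h * g := by
  letI := s.mon
  letI := s.preadd
  -- the morphism `𝟙_ ⟶ 𝟙_` corresponding to `f : Module.End R ↥(s.unit)`
  let m : Module.End R ↥(s.unit) → (𝟙_ (ModuleCat.{u} R) ⟶ 𝟙_ (ModuleCat.{u} R)) :=
    fun f => ModuleCat.ofHom (f : ↥(s.unit) →ₗ[R] ↥(s.unit))
  -- transport along the left unitor
  let T : Module.End R ↥(s.unit) → ∀ X : ModuleCat.{u} R, (X ⟶ X) := fun f X =>
    (λ_ X).inv ≫ (m f ▷ X) ≫ (λ_ X).hom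
  have hnat : ∀ (f : Module.End R ↥(s.unit)) {X Y : ModuleCat.{u} R} (u : X ⟶ Y),
      T f X ≫ u = u ≫ T f Y := fun f _ _ u => aux_whisker_nat (m f) u
  have hTK : ∀ f : Module.End R ↥(s.unit), T f (𝟙_ (ModuleCat.{u} R)) = m f :=
    fun f => aux_whisker_unit (m f)
  -- the candidate element of `R`, obtained from the action on the module `R`
  let M : ModuleCat.{u} R := ModuleCat.of R R
  let e : Module.End R ↥(s.unit) → R := fun f => T f M (1 : R)
  -- `T f M` is right multiplication by `e f`
  have hTlin : ∀ (f : Module.End R ↥(s.unit)) (r : R), T f M r = r * e f := by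
    intro f r
    have h := map_smul (ConcreteCategory.hom (T f M)) r ((1 : R) : ↥M)
    simpa [smul_eq_mul] using h
  -- key formula : `f x = e f • x` for every `x` in the unit module
  have hkey : ∀ (f : Module.End R ↥(s.unit)) (x : ↥(s.unit)), f x = e f • x := by
    intro f x
    let u : M ⟶ 𝟙_ (ModuleCat.{u} R) := ModuleCat.ofHom (LinearMap.toSpanSingleton R ↥(s.unit) x)
    have h := congrArg (fun φ => φ ((1 : R) : ↥M)) (hnat f u)
    simp only [CategoryTheory.comp_apply, Function.comp_apply] at h
    rw [hTK f] at h
    have hu1 : u ((1 : R) : ↥M) = x := one_smul R x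
    rw [hu1] at h
    -- h : u (T f M 1) = m f x
    exact h.symm
  -- each `e f` is central
  have hcent : ∀ f : Module.End R ↥(s.unit), e f ∈ Subring.center R := by
    intro f
    rw [Subring.mem_center_iff]
    intro b
    let u : M ⟶ M := ModuleCat.ofHom (LinearMap.toSpanSingleton R R b)
    have h := congrArg (fun φ => φ ((1 : R) : ↥M)) (hnat f u)
    simp only [CategoryTheory.comp_apply, Function.comp_apply] at h
    -- h : u (T f M 1) = T f M (u 1)
    have h1 : u (T f M ((1 : R) : ↥M)) = e f * b := rfl
    have hu1 : u ((1 : R) : ↥M) = b := one_mul b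
    rw [h1, hu1, hTlin f b] at h
    exact h.symm
  -- `e` determines `f`
  have hinj : ∀ f g : Module.End R ↥(s.unit), e f = e g → f = g := by
    intro f g h
    apply LinearMap.ext
    intro x
    rw [hkey f x, hkey g x, h]
  -- algebraic properties of `e`
  have hone : e 1 = 1 := by
    have hm : m (1 : Module.End R ↥(s.unit)) = 𝟙 (𝟙_ (ModuleCat.{u} R)) := rfl
    simp only [e, T, hm, MonoidalCategory.id_whiskerRight, Category.id_comp,
      Iso.inv_hom_id]
    rfl
  have hadd : ∀ f g : Module.End R ↥(s.unit), e (f + g) = e f + e g := by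
    intro f g
    have hw : (m (f + g)) ▷ M = (m f ▷ M) + (m g ▷ M) :=
      MonoidalPreadditive.add_whiskerRight (m f) (m g)
    simp only [e, T, hw, Preadditive.comp_add, Preadditive.add_comp]
    rfl
  have hmul : ∀ f g : Module.End R ↥(s.unit), e (f * g) = e f * e g := by
    intro f g
    have hm : m (f * g) = m g ≫ m f := rfl
    have hT : T (f * g) M = T g M ≫ T f M := by
      simp only [T, hm, MonoidalCategory.comp_whiskerRight, Category.assoc]
      rw [← Category.assoc (λ_ M).hom (λ_ M).inv, Iso.hom_inv_id, Category.id_comp]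
    have h2 : e (f * g) = T f M (e g) := by
      simp only [e, hT, CategoryTheory.comp_apply, Function.comp_apply]
    rw [h2, hTlin f (e g)]
    exact ((Subring.mem_center_iff.mp (hcent g)) (e f)).symm
  -- assemble the ring hom
  refine ⟨{ toFun := fun f => ⟨e f, hcent f⟩
            map_one' := Subtype.ext hone
            map_mul' := fun f g => Subtype.ext (hmul f g)
            map_zero' := ?_
            map_add' := fun f g => Subtype.ext (hadd f g) }, ?_, ?_⟩
  · have h0 : e 0 = e 0 + e 0 := by simpa using hadd 0 0
    exact Subtype.ext (left_eq_add.mp h0)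
  · intro f g h
    exact hinj f g (congrArg Subtype.val h)
  · intro g h
    apply hinj
    rw [hmul, hmul]
    exact ((Subring.mem_center_iff.mp (hcent h)) (e g))
end

section
/- Let R be a ring with an additive closed symmetric monoidal structure on the category of left R-modules, with unit object K. If K has a submodule L with ⊥ < L < K (a nonzero proper submodule), then R has a two-sided ideal I with ⊥ < I < R (a nonzero proper two-sided ideal). Consequently, if R is a simple ring, then K is a simple left R-module. -/
open CategoryTheory MonoidalCategory

universe u

open Limits in
/-- Auxiliary joint-epi lemma: a map out of `A ⊗ M` vanishing after `A ◁ g` for every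
`g : R ⟶ M` is zero. -/
lemma aux_jointly_zero {R : Type u} [Ring R] [mon : MonoidalCategory (ModuleCat.{u} R)]
    [MonoidalClosed (ModuleCat.{u} R)]
    {A M C : ModuleCat.{u} R} (h : A ⊗ M ⟶ C)
    (H : ∀ g : ModuleCat.of R R ⟶ M, (A ◁ g) ≫ h = 0) : h = 0 := by
  classical
  let T : ModuleCat.{u} R := ModuleCat.of R R
  let g : ↥M → (T ⟶ M) := fun m => ModuleCat.ofHom (LinearMap.toSpanSingleton R M m)
  let e : (∐ fun _ : ↥M => T) ⟶ M := Sigma.desc g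
  have he : Epi e := by
    rw [ModuleCat.epi_iff_surjective]
    intro m
    refine ⟨Sigma.ι (fun _ : ↥M => T) m (1 : R), ?_⟩
    have h1 : Sigma.ι (fun _ : ↥M => T) m ≫ e = g m := Sigma.ι_desc _ _
    have h2 := congrArg (fun φ : T ⟶ M => φ (1 : R)) h1
    have h3 : (g m) (1 : R) = m := one_smul R m
    exact h2.trans h3
  haveI : PreservesColimitsOfSize.{u, u} (tensorLeft A) :=
    (ihom.adjunction A).leftAdjoint_preservesColimits
  haveI : PreservesColimitsOfSize.{0, 0} (tensorLeft A) :=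
    (ihom.adjunction A).leftAdjoint_preservesColimits
  haveI : Epi ((tensorLeft A).map e) := inferInstance
  have key : (tensorLeft A).map e ≫ h = (tensorLeft A).map e ≫ 0 := by
    apply (isColimitOfPreserves (tensorLeft A)
      (colimit.isColimit (Discrete.functor fun _ : ↥M => T))).hom_ext
    rintro ⟨m⟩
    have hι : (colimit.cocone (Discrete.functor fun _ : ↥M => T)).ι.app ⟨m⟩ ≫ e = g m :=
      Sigma.ι_desc _ _
    show (tensorLeft A).map _ ≫ (tensorLeft A).map e ≫ h =
      (tensorLeft A).map _ ≫ (tensorLeft A).map e ≫ 0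
    rw [Limits.comp_zero, Limits.comp_zero, ← Functor.map_comp_assoc, hι]
    show A ◁ (g m) ≫ h = 0
    exact H (g m)
  have := (cancel_epi ((tensorLeft A).map e)).1 key
  simpa using this

/-- If the unit `K` of an additive closed symmetric monoidal structure on left `R`-modules has a
nonzero proper submodule, then `R` has a nonzero proper two-sided ideal.  Consequently, if `R` is
a simple ring then `K` is a simple module. -/
theorem twoSidedIdeal_of_submodule_of_unit (R : Type u) [Ring R] (s : AddClosedSymmMonStruct R) :
    ((∃ L : Submodule R ↥(s.unit), ⊥ < L ∧ L < ⊤) →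
      ∃ I : TwoSidedIdeal R, ⊥ < I ∧ I < ⊤) ∧
    (IsSimpleRing R → IsSimpleModule R ↥(s.unit)) := by
  letI := s.mon
  letI := s.closed
  letI := s.preadd
  have main : (∃ L : Submodule R ↥(s.unit), ⊥ < L ∧ L < ⊤) →
      ∃ I : TwoSidedIdeal R, ⊥ < I ∧ I < ⊤ := by
    rintro ⟨L, hLbot, hLtop⟩
    let T : ModuleCat.{u} R := ModuleCat.of R R
    let L' : ModuleCat.{u} R := ModuleCat.of R ↥L
    let incl : L' ⟶ 𝟙_ (ModuleCat.{u} R) := ModuleCat.ofHom L.subtype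
    let f : L' ⊗ T ⟶ T := (incl ▷ T) ≫ (λ_ T).hom
    -- right-multiplication stability
    have hright : ∀ (r x : R), x ∈ LinearMap.range f.hom → x * r ∈ LinearMap.range f.hom := by
      intro r x hx
      obtain ⟨y, hy⟩ := hx
      let ρr : T ⟶ T := ModuleCat.ofHom (LinearMap.toSpanSingleton R R r)
      have hnat : f ≫ ρr = (L' ◁ ρr) ≫ f := by
        show ((incl ▷ T) ≫ (λ_ T).hom) ≫ ρr = (L' ◁ ρr) ≫ (incl ▷ T) ≫ (λ_ T).hom
        rw [Category.assoc, ← MonoidalCategory.leftUnitor_naturality, ← Category.assoc,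
          ← whisker_exchange, Category.assoc]
      refine ⟨(L' ◁ ρr) y, ?_⟩
      have h2 := congrArg (fun φ : L' ⊗ T ⟶ T => φ y) hnat
      have h3 : (f ≫ ρr) y = x * r := by
        show ρr (f y) = x * r
        rw [hy]
        rfl
      exact h2.symm.trans h3
    let I₀ : Submodule R R := LinearMap.range f.hom
    let I : TwoSidedIdeal R := TwoSidedIdeal.mk' (I₀ : Set R)
      (Submodule.zero_mem _)
      (fun hx hy => Submodule.add_mem _ hx hy)
      (fun hx => Submodule.neg_mem _ hx)
      (fun {a b} hb => by
        have h4 := Submodule.smul_mem I₀ a hb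
        rw [smul_eq_mul] at h4
        exact h4)
      (fun {a b} ha => hright b a ha)
    have hmemI : ∀ x : R, x ∈ I ↔ x ∈ I₀ := fun x =>
      TwoSidedIdeal.mem_mk' _ _ _ _ _ _ x
    have hne_bot : I ≠ ⊥ := by
      intro hI
      have hf0 : f = 0 := by
        have : I₀ = ⊥ := by
          rw [eq_bot_iff]
          intro x hx
          have : x ∈ I := (hmemI x).2 hx
          rw [hI, TwoSidedIdeal.mem_bot] at this
          simpa [Submodule.mem_bot] using this
        exact ModuleCat.hom_ext (LinearMap.range_eq_bot.1 this)
      have hwr : incl ▷ T = 0 := by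
        have : incl ▷ T = f ≫ (λ_ T).inv := by
          show incl ▷ T = ((incl ▷ T) ≫ (λ_ T).hom) ≫ (λ_ T).inv
          simp
        rw [this, hf0, Limits.zero_comp]
      have hKwr : incl ▷ (𝟙_ (ModuleCat.{u} R)) = 0 := by
        apply aux_jointly_zero
        intro g
        rw [whisker_exchange, hwr, Limits.zero_comp]
      have hincl0 : incl = 0 := by
        have : incl ▷ 𝟙_ _ ≫ (ρ_ (𝟙_ (ModuleCat.{u} R))).hom = (ρ_ L').hom ≫ incl :=
          MonoidalCategory.rightUnitor_naturality incl
        rw [hKwr, Limits.zero_comp] at this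
        have h2 := congrArg (fun φ => (ρ_ L').inv ≫ φ) this
        simpa using h2.symm
      obtain ⟨x, hxL, hx0⟩ := SetLike.exists_of_lt hLbot
      have : incl ⟨x, hxL⟩ = x := rfl
      rw [hincl0] at this
      exact hx0 ((Submodule.mem_bot R).2 (this.symm.trans rfl))
    have hne_top : I ≠ ⊤ := by
      intro hI
      have hsurj : I₀ = ⊤ := by
        rw [eq_top_iff]
        intro x _
        exact (hmemI x).1 (by rw [hI]; exact TwoSidedIdeal.mem_top R)
      haveI hef : Epi f := (ModuleCat.epi_iff_range_eq_top f).2 hsurj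
      haveI hewr : Epi (incl ▷ T) := by
        have : incl ▷ T = f ≫ (λ_ T).inv := by
          show incl ▷ T = ((incl ▷ T) ≫ (λ_ T).hom) ≫ (λ_ T).inv
          simp
        rw [this]
        infer_instance
      let Q : ModuleCat.{u} R := ModuleCat.of R (↥(s.unit) ⧸ L)
      let quot : 𝟙_ (ModuleCat.{u} R) ⟶ Q := ModuleCat.ofHom L.mkQ
      have hiq : incl ≫ quot = 0 := by
        apply ModuleCat.hom_ext
        apply LinearMap.ext
        intro y
        show L.mkQ (L.subtype y) = 0
        simpa [Submodule.Quotient.mk_eq_zero] using y.2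
      have hq0 : quot ▷ T = 0 := by
        have hcomp : (incl ▷ T) ≫ (quot ▷ T) = (incl ▷ T) ≫ 0 := by
          rw [← comp_whiskerRight, hiq, Limits.comp_zero]
          simp
        exact (cancel_epi (incl ▷ T)).1 hcomp
      have hqK : quot ▷ (𝟙_ (ModuleCat.{u} R)) = 0 := by
        apply aux_jointly_zero
        intro g
        rw [whisker_exchange, hq0, Limits.zero_comp]
      have hquot0 : quot = 0 := by
        have : quot ▷ 𝟙_ _ ≫ (ρ_ Q).hom = (ρ_ (𝟙_ (ModuleCat.{u} R))).hom ≫ quot :=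
          MonoidalCategory.rightUnitor_naturality quot
        rw [hqK, Limits.zero_comp] at this
        have h2 := congrArg (fun φ => (ρ_ (𝟙_ (ModuleCat.{u} R))).inv ≫ φ) this
        simpa using h2.symm
      have : L = ⊤ := by
        rw [eq_top_iff]
        intro x _
        have : quot x = 0 := by rw [hquot0]; rfl
        have hx : L.mkQ x = 0 := this
        exact (Submodule.Quotient.mk_eq_zero L).1 hx
      exact hLtop.ne this
    exact ⟨I, hne_bot.bot_lt, hne_top.lt_top⟩
  refine ⟨main, ?_⟩
  intro hs
  haveI := hs
  haveI : IsSimpleOrder (TwoSidedIdeal R) := hs.1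
  have hnt : Nontrivial ↥(s.unit) := by
    by_contra hK
    rw [not_nontrivial_iff_subsingleton] at hK
    haveI : Subsingleton ↥(𝟙_ (ModuleCat.{u} R)) := hK
    have h1 : (𝟙 (𝟙_ (ModuleCat.{u} R)) : 𝟙_ (ModuleCat.{u} R) ⟶ 𝟙_ (ModuleCat.{u} R)) = 0 := by
      apply ModuleCat.hom_ext
      apply LinearMap.ext
      intro x
      exact Subsingleton.elim _ _
    let T : ModuleCat.{u} R := ModuleCat.of R R
    have h2 : (𝟙 T : T ⟶ T) = 0 := by
      have : (𝟙 (𝟙_ (ModuleCat.{u} R)) ▷ T) = 𝟙 (𝟙_ (ModuleCat.{u} R) ⊗ T) :=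
        MonoidalCategory.id_whiskerRight _ _
      rw [h1, MonoidalPreadditive.zero_whiskerRight] at this
      calc (𝟙 T : T ⟶ T) = (λ_ T).inv ≫ 𝟙 _ ≫ (λ_ T).hom := by simp
        _ = (λ_ T).inv ≫ (0 : 𝟙_ _ ⊗ T ⟶ 𝟙_ _ ⊗ T) ≫ (λ_ T).hom := by rw [this]
        _ = 0 := by simp
    have hsub : Subsingleton ((↥T) : Type u) := by
      refine ⟨fun a b => ?_⟩
      have ha := congrArg (fun φ : T ⟶ T => φ a) h2
      have hb := congrArg (fun φ : T ⟶ T => φ b) h2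
      calc a = (𝟙 T : T ⟶ T) a := rfl
        _ = (0 : T ⟶ T) a := ha
        _ = 0 := LinearMap.zero_apply a
        _ = (0 : T ⟶ T) b := (LinearMap.zero_apply b).symm
        _ = (𝟙 T : T ⟶ T) b := hb.symm
        _ = b := rfl
    have hsubR : Subsingleton R := hsub
    exact not_subsingleton R hsubR
  haveI : Nontrivial (Submodule R ↥(s.unit)) :=
    ⟨⊥, ⊤, by
      intro h
      obtain ⟨x, y, hxy⟩ := hnt
      have hx : x ∈ (⊤ : Submodule R ↥(s.unit)) := trivial
      rw [← h, Submodule.mem_bot] at hx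
      have hy : y ∈ (⊤ : Submodule R ↥(s.unit)) := trivial
      rw [← h, Submodule.mem_bot] at hy
      exact hxy (hx.trans hy.symm)⟩
  refine { eq_bot_or_eq_top := fun L => ?_ }
  by_contra hL
  push_neg at hL
  obtain ⟨I, hI1, hI2⟩ := main ⟨L, hL.1.bot_lt, hL.2.lt_top⟩
  rcases IsSimpleOrder.eq_bot_or_eq_top I with h | h
  · exact hI1.ne' h
  · exact hI2.ne h
end

section
/- Let R be a nontrivial ring with an additive closed symmetric monoidal structure on the category of left R-modules, with unit object K. If the only central idempotents of R are 0 and 1 (R is indecomposable as a ring), then K is an indecomposable R-module: K ≠ 0, and whenever M and N are submodules of K with M ⊓ N = ⊥ and M ⊔ N = K, either M = ⊥ or N = ⊥. -/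
open CategoryTheory MonoidalCategory

universe u

/-- If `R` is a nontrivial ring whose only central idempotents are `0` and `1`, then the unit `K`
of any additive closed symmetric monoidal structure on the category of left `R`-modules is an
indecomposable module: `K ≠ 0`, and any two complementary submodules of `K` are trivial. -/
theorem unit_indecomposable (R : Type u) [Ring R] [Nontrivial R]
    (s : AddClosedSymmMonStruct R)
    (h : ∀ e : R, e ∈ Set.center R → e * e = e → e = 0 ∨ e = 1) :
    (∃ x : ↥(s.unit), x ≠ 0) ∧
      ∀ M N : Submodule R ↥(s.unit), M ⊓ N = ⊥ → M ⊔ N = ⊤ → M = ⊥ ∨ N = ⊥ := by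
  letI := s.mon
  letI := s.preadd
  show (∃ x : ↥(𝟙_ (ModuleCat.{u} R)), x ≠ 0) ∧
      ∀ M N : Submodule R ↥(𝟙_ (ModuleCat.{u} R)), M ⊓ N = ⊥ → M ⊔ N = ⊤ → M = ⊥ ∨ N = ⊥
  have capp : ∀ {X Y Z : ModuleCat.{u} R} (f : X ⟶ Y) (g : Y ⟶ Z) (x : X),
      (f ≫ g) x = g (f x) := fun _ _ _ => rfl
  have one : ↥(ModuleCat.of R R) := (1 : R)
  have key : ∀ e : 𝟙_ (ModuleCat.{u} R) ⟶ 𝟙_ (ModuleCat.{u} R), e ≫ e = e →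
      e = 0 ∨ e = 𝟙 (𝟙_ (ModuleCat.{u} R)) := by
    intro e he
    let η : ∀ X : ModuleCat.{u} R, X ⟶ X :=
      fun X => (λ_ X).inv ≫ (e ▷ X) ≫ (λ_ X).hom
    have hnat : ∀ {X Y : ModuleCat.{u} R} (f : X ⟶ Y), η X ≫ f = f ≫ η Y := by
      intro X Y f
      simp only [η, Category.assoc, ← leftUnitor_naturality, whisker_exchange_assoc,
        leftUnitor_inv_naturality_assoc]
    set z : R := η (ModuleCat.of R R) (1 : R) with hzdef
    have hval : ∀ (X : ModuleCat.{u} R) (x : X), η X x = z • x := by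
      intro X x
      let f : ModuleCat.of R R ⟶ X := ModuleCat.ofHom (LinearMap.toSpanSingleton R X x)
      have h1 : f (η (ModuleCat.of R R) (1 : R)) = η X (f (1 : R)) := by
        have := ConcreteCategory.congr_hom (hnat f) ((1 : R) : ModuleCat.of R R)
        rw [capp, capp] at this
        exact this
      have e1 : f ((1 : R) : ModuleCat.of R R) = x := one_smul R x
      have e2 : f (η (ModuleCat.of R R) (1 : R)) = z • x := rfl
      rw [e1, e2] at h1
      exact h1.symm
    have hcent : z ∈ Set.center R := by
      rw [Semigroup.mem_center_iff]
      intro r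
      have h1 : η (ModuleCat.of R R) (r • (1 : R)) = r • z := map_smul (η (ModuleCat.of R R)).hom r (1 : R)
      rw [hval (ModuleCat.of R R)] at h1
      simpa [smul_eq_mul] using h1.symm
    have hidem : z * z = z := by
      have hee : η (ModuleCat.of R R) ≫ η (ModuleCat.of R R) = η (ModuleCat.of R R) := by
        simp only [η, Category.assoc, Iso.hom_inv_id_assoc, ← comp_whiskerRight_assoc, he]
      have h2 : η (ModuleCat.of R R) (η (ModuleCat.of R R) (1 : R)) = η (ModuleCat.of R R) (1 : R) := by
        have := ConcreteCategory.congr_hom hee ((1 : R) : ModuleCat.of R R)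
        rw [capp] at this
        exact this
      have h3 := hval (ModuleCat.of R R) (z : R)
      rw [← hzdef] at h2
      rw [h2] at h3
      simpa [smul_eq_mul] using h3.symm
    have heK : η (𝟙_ (ModuleCat.{u} R)) = e := by
      simp [η, unitors_equal, unitors_inv_equal]
    rcases h z hcent hidem with hz | hz
    · left
      rw [← heK]
      ext x
      rw [hval, hz, zero_smul]
      rfl
    · right
      rw [← heK]
      ext x
      rw [hval, hz, one_smul]
      rfl
  constructor
  · by_contra hx
    push_neg at hx
    have h0 : (𝟙 (𝟙_ (ModuleCat.{u} R)) : _ ⟶ _) = 0 := by ext x; exact hx _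
    have h1 : (λ_ (ModuleCat.of R R)).inv ≫ ((𝟙 (𝟙_ (ModuleCat.{u} R))) ▷ ModuleCat.of R R) ≫
        (λ_ (ModuleCat.of R R)).hom = 𝟙 (ModuleCat.of R R) := by simp
    rw [h0] at h1
    simp only [MonoidalPreadditive.zero_whiskerRight, Limits.zero_comp, Limits.comp_zero] at h1
    have h2 := ConcreteCategory.congr_hom h1 ((1 : R) : ModuleCat.of R R)
    have h3 : (0 : ModuleCat.of R R ⟶ ModuleCat.of R R) (1 : R) = (0 : R) := rfl
    have h4 : (𝟙 (ModuleCat.of R R) : ModuleCat.of R R ⟶ ModuleCat.of R R)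
        (1 : R) = (1 : R) := rfl
    rw [h3, h4] at h2
    have h5 : (1 : R) = (0 : R) := h2.symm
    exact one_ne_zero h5
  · intro M N hMN hMN'
    have hc : IsCompl M N := ⟨disjoint_iff.mpr hMN, codisjoint_iff.mpr hMN'⟩
    let p : 𝟙_ (ModuleCat.{u} R) ⟶ 𝟙_ (ModuleCat.{u} R) :=
      ModuleCat.ofHom (M.subtype ∘ₗ (M.projectionOnto N hc))
    have happ : ∀ x, p x = ((M.projectionOnto N hc x : M) : _) := fun _ => rfl
    have hp : p ≫ p = p := by
      ext x
      rw [capp, happ x, happ,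
        Submodule.projectionOnto_apply_left hc ((M.projectionOnto N hc) x)]
    rcases key p hp with h0 | h1
    · left
      rw [eq_bot_iff]
      intro x hxM
      have : p x = x := by
        rw [happ, Submodule.projectionOnto_apply_left hc ⟨x, hxM⟩]
      rw [h0] at this
      simp only [Submodule.mem_bot]
      exact this.symm.trans rfl
    · right
      rw [eq_bot_iff]
      intro x hxN
      have hpx : p x = 0 := by
        rw [happ, Submodule.projectionOnto_apply_of_mem_right hc hxN,
          Submodule.coe_zero]
      rw [h1] at hpx
      simp only [Submodule.mem_bot]
      exact (ModuleCat.id_apply _ x).symm.trans hpx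
end
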